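/- arXiv:1204.3336 — 8 statements merged into one kernel-verified Lean document; each statement's English description precedes it below -/
import Mathlib

section
/- Let A be a self-adjoint bounded operator on a complex Hilbert space with σ(A) ⊆ [λ₁, λ₂], λ₁ > 0, and suppose neither λ₁ nor λ₂ is an eigenvalue of A. Then for every unitary operator U, the operator UA has no eigenvalue λ with |λ| = λ₁, and no eigenvalue λ with |λ| = λ₂. -/
open scoped InnerProductSpace

/-- If `A` is self-adjoint with `σ(A) ⊆ [λ₁, λ₂]`, `λ₁ > 0`, and neither `λ₁` nor `λ₂`
is an eigenvalue of `A`, then for every unitary `U` the operator `UA` has no eigenvalue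
of modulus `λ₁` and no eigenvalue of modulus `λ₂`. -/
theorem stmt3 {H : Type*} [NormedAddCommGroup H] [InnerProductSpace ℂ H] [CompleteSpace H]
    (A : H →L[ℂ] H) (hA : IsSelfAdjoint A) (l1 l2 : ℝ) (hl1 : 0 < l1) (hl12 : l1 ≤ l2)
    (hspec : spectrum ℂ A ⊆ Complex.ofReal '' Set.Icc l1 l2)
    (h1 : ¬ ∃ x : H, x ≠ 0 ∧ A x = (l1 : ℂ) • x)
    (h2 : ¬ ∃ x : H, x ≠ 0 ∧ A x = (l2 : ℂ) • x) :
    ∀ U : H →L[ℂ] H, U ∈ unitary (H →L[ℂ] H) →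
      ∀ μ : ℂ, (‖μ‖ = l1 ∨ ‖μ‖ = l2) →
        ¬ ∃ x : H, x ≠ 0 ∧ (U * A) x = μ • x := by
  intro U hU μ hμ hex
  obtain ⟨x, hx0, hUAx⟩ := hex
  obtain ⟨l, hμl, hlor, hcon⟩ :
      ∃ l : ℝ, ‖μ‖ = l ∧ (l = l1 ∨ l = l2) ∧
        ¬ ∃ y : H, y ≠ 0 ∧ A y = (l : ℂ) • y := by
    rcases hμ with h | h
    · exact ⟨l1, h, Or.inl rfl, h1⟩
    · exact ⟨l2, h, Or.inr rfl, h2⟩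
  have hll : (l - l1) * (l - l2) = 0 := by
    rcases hlor with h | h <;> rw [h] <;> ring
  have hlpos : 0 < l := by
    rcases hlor with h | h
    · rw [h]; exact hl1
    · rw [h]; exact lt_of_lt_of_le hl1 hl12
  -- norm of A x
  have hAx : ‖A x‖ = l * ‖x‖ := by
    have h1' : ‖U (A x)‖ = ‖A x‖ := U.norm_map_of_mem_unitary hU _
    have h2' : U (A x) = μ • x := hUAx
    rw [h2'] at h1'
    rw [← h1', norm_smul, hμl]
  set m : ℝ := (l1 + l2) / 2 with hmdef
  set r : ℝ := (l2 - l1) / 2 with hrdef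
  have hr0 : 0 ≤ r := by rw [hrdef]; linarith
  have hmpos : 0 < m := by rw [hmdef]; linarith
  set B : H →L[ℂ] H := A - (m : ℂ) • 1 with hBdef
  have hB : IsSelfAdjoint B := by
    refine hA.sub ?_
    simp [IsSelfAdjoint, star_smul, Complex.star_def, Complex.conj_ofReal]
  -- norm bound on B via spectral radius
  have hBnorm : ‖B‖ ≤ r := by
    have hsr := hB.spectralRadius_eq_nnnorm
    have hspecB : ∀ k ∈ spectrum ℂ B, ‖k‖ ≤ r := by
      intro k hk
      have halg : (m : ℂ) • (1 : H →L[ℂ] H) = algebraMap ℂ _ (m : ℂ) := by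
        simp [Algebra.algebraMap_eq_smul_one]
      rw [hBdef, halg, ← spectrum.sub_singleton_eq] at hk
      obtain ⟨z, hz, w, hw, hk⟩ := hk
      obtain ⟨t, ht, rfl⟩ := hspec hz
      simp only [Set.mem_singleton_iff] at hw
      subst hw
      have hk' : (t : ℂ) - (m : ℂ) = k := hk
      rw [← hk']
      have hcast : ((t : ℂ) - (m : ℂ)) = ((t - m : ℝ) : ℂ) := by push_cast; ring
      rw [hcast, Complex.norm_real, Real.norm_eq_abs, abs_le]
      rw [Set.mem_Icc] at ht
      rw [hmdef, hrdef]
      constructor <;> linarith [ht.1, ht.2]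
    have hle : spectralRadius ℂ B ≤ (Real.toNNReal r : ENNReal) := by
      refine iSup₂_le fun k hk => ?_
      have hk2 := hspecB k hk
      rw [ENNReal.coe_le_coe, ← NNReal.coe_le_coe, Real.coe_toNNReal r hr0]
      exact hk2
    rw [hsr, ENNReal.coe_le_coe, ← NNReal.coe_le_coe, Real.coe_toNNReal r hr0] at hle
    exact hle
  have hBx : ‖A x - (m : ℂ) • x‖ ≤ r * ‖x‖ := by
    have hb : B x = A x - (m : ℂ) • x := by simp [hBdef]
    rw [← hb]
    exact (B.le_opNorm x).trans (mul_le_mul_of_nonneg_right hBnorm (norm_nonneg _))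
  -- expand norm squared
  set s : ℝ := (⟪A x, x⟫_ℂ).re with hsdef
  have hexp : ‖A x - (m : ℂ) • x‖ ^ 2 = ‖A x‖ ^ 2 - 2 * (m * s) + (m * ‖x‖) ^ 2 := by
    rw [norm_sub_sq (𝕜 := ℂ), inner_smul_right]
    congr 2
    · rw [RCLike.re_to_complex, Complex.mul_re]
      simp [hsdef]
    · rw [norm_smul, Complex.norm_real, Real.norm_eq_abs, abs_of_pos hmpos]
  have hsge : l * (‖x‖ * ‖x‖) ≤ s := by
    have hsq : ‖A x - (m : ℂ) • x‖ ^ 2 ≤ (r * ‖x‖) ^ 2 :=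
      pow_le_pow_left₀ (norm_nonneg _) hBx 2
    rw [hexp, hAx, hmdef, hrdef] at hsq
    have hlln : (l - l1) * (l - l2) * (‖x‖ * ‖x‖) = 0 := by rw [hll]; ring
    have hl1l2 : 0 < l1 + l2 := by linarith
    have key : 0 ≤ (l1 + l2) * (s - l * (‖x‖ * ‖x‖)) := by nlinarith [hsq, hlln]
    have := (mul_nonneg_iff_of_pos_left hl1l2).mp key
    linarith
  -- Cauchy-Schwarz equality
  have hcs : ‖⟪A x, x⟫_ℂ‖ ≤ l * ‖x‖ * ‖x‖ := by
    have hni := norm_inner_le_norm (𝕜 := ℂ) (A x) x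
    rw [hAx] at hni
    simpa [mul_assoc] using hni
  have hre_le : s ≤ ‖⟪A x, x⟫_ℂ‖ := Complex.re_le_norm _
  have hseq : s = l * ‖x‖ * ‖x‖ := by linarith [hsge, hre_le, hcs]
  have habs : ‖⟪A x, x⟫_ℂ‖ = s := le_antisymm (by linarith [hcs, hseq]) hre_le
  have him : (⟪A x, x⟫_ℂ).im = 0 := by
    have hsq := Complex.sq_norm ⟪A x, x⟫_ℂ
    rw [habs, Complex.normSq_apply, ← hsdef] at hsq
    have : (⟪A x, x⟫_ℂ).im * (⟪A x, x⟫_ℂ).im = 0 := by nlinarith [hsq, sq_abs s]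
    exact mul_self_eq_zero.mp this
  have hinner : ⟪A x, x⟫_ℂ = ((‖A x‖ : ℂ) * (‖x‖ : ℂ)) := by
    refine Complex.ext ?_ ?_
    · rw [← hsdef, Complex.mul_re]
      simp only [Complex.ofReal_re, Complex.ofReal_im, mul_zero, sub_zero]
      rw [hseq, hAx]
    · rw [him, Complex.mul_im]
      simp
  have hkey := (inner_eq_norm_mul_iff (𝕜 := ℂ)).mp hinner
  have hxnorm : (‖x‖ : ℂ) ≠ 0 := by
    simp [norm_eq_zero, hx0]
  have hfin : A x = (l : ℂ) • x := by
    refine smul_right_injective H hxnorm ?_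
    show (‖x‖ : ℂ) • A x = (‖x‖ : ℂ) • ((l : ℂ) • x)
    refine hkey.trans ?_
    rw [hAx, RCLike.ofReal_mul, smul_smul, mul_comm]
    norm_cast
  exact hcon ⟨x, hx0, hfin⟩
end

section
/- Let A be a self-adjoint bounded operator with σ(A) ⊆ [λ₁, λ₂], λ₁ > 0, let U be unitary, and suppose UAx = λx for some nonzero x with |λ| = λ₁. Then Ker(λI − UA) ⊆ Ker(λ₁I − A), this kernel is a reducing subspace for both A and U, and A restricted to it equals λ₁ times the identity. -/
/-- If `A` is self-adjoint with `σ(A) ⊆ [λ₁, λ₂]`, `λ₁ > 0`, `U` unitary, and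
`UAx = λx` for some nonzero `x` with `|λ| = λ₁`, then `K = Ker(λI − UA)` is contained
in `Ker(λ₁I − A)` (indeed `A` acts on `K` as `λ₁` times the identity) and `K` is a
reducing subspace for both `A` and `U`. -/
theorem stmt4 {H : Type*} [NormedAddCommGroup H] [InnerProductSpace ℂ H] [CompleteSpace H]
    (A : H →L[ℂ] H) (hA : IsSelfAdjoint A) (l1 l2 : ℝ) (hl1 : 0 < l1) (hl12 : l1 ≤ l2)
    (hspec : spectrum ℂ A ⊆ Complex.ofReal '' Set.Icc l1 l2)
    (U : H →L[ℂ] H) (hU : U ∈ unitary (H →L[ℂ] H))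
    (μ : ℂ) (hμ : ‖μ‖ = l1)
    (x : H) (hx : x ≠ 0) (hev : (U * A) x = μ • x)
    (K : Submodule ℂ H) (hK : K = LinearMap.ker ((μ • (1 : H →L[ℂ] H) - U * A : H →L[ℂ] H) : H →ₗ[ℂ] H)) :
    (∀ y ∈ K, A y = (l1 : ℂ) • y) ∧
    (K ≤ LinearMap.ker (((l1 : ℂ) • (1 : H →L[ℂ] H) - A : H →L[ℂ] H) : H →ₗ[ℂ] H)) ∧
    (∀ y ∈ K, A y ∈ K) ∧ (∀ y ∈ K, U y ∈ K) ∧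
    (∀ y ∈ Kᗮ, A y ∈ Kᗮ) ∧ (∀ y ∈ Kᗮ, U y ∈ Kᗮ) := by
  have hμ0 : μ ≠ 0 := by
    intro h; rw [h] at hμ; simp at hμ; linarith
  have hl1' : (l1 : ℂ) ≠ 0 := by exact_mod_cast hl1.ne'
  -- membership criterion for K
  have hmemK : ∀ y, y ∈ K ↔ (U * A) y = μ • y := by
    intro y
    rw [hK, LinearMap.mem_ker]
    constructor
    · intro h
      have := sub_eq_zero.mp (by simpa using h)
      simpa using this.symm
    · intro h
      simp only [ContinuousLinearMap.coe_coe, ContinuousLinearMap.sub_apply, ContinuousLinearMap.smul_apply,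
        ContinuousLinearMap.one_apply, h, sub_self]
  -- positivity : A - l1 • 1 is positive
  have hBsa : IsSelfAdjoint (A - (l1 : ℂ) • 1) := by
    apply hA.sub
    rw [IsSelfAdjoint, star_smul, star_one]
    simp [Complex.star_def, Complex.conj_ofReal]
  have hBspec : ∀ r ∈ spectrum ℝ (A - (l1 : ℂ) • 1), 0 ≤ r := by
    intro r hr
    have h1 : ((r : ℂ)) ∈ spectrum ℂ (A - (l1 : ℂ) • 1) := by
      have := spectrum.algebraMap_mem ℂ hr
      simpa [Complex.coe_algebraMap] using this
    have h2 : (r : ℂ) + l1 ∈ spectrum ℂ A := by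
      have hrw : A - (l1 : ℂ) • 1 = A - algebraMap ℂ (H →L[ℂ] H) (l1 : ℂ) := by
        simp [Algebra.algebraMap_eq_smul_one]
      rw [hrw, ← spectrum.sub_singleton_eq] at h1
      obtain ⟨s, hs, t, ht, hst⟩ := h1
      rcases Set.mem_singleton_iff.mp ht with rfl
      have : s = (r : ℂ) + l1 := by linear_combination hst
      rwa [← this]
    obtain ⟨c, hc, hceq⟩ := hspec h2
    have hcr : c = r + l1 := by
      have : (c : ℂ) = ((r + l1 : ℝ) : ℂ) := by push_cast; linear_combination hceq
      exact_mod_cast this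
    have := hc.1
    linarith
  have hBpos : (A - (l1 : ℂ) • 1).IsPositive := by
    rw [← ContinuousLinearMap.nonneg_iff_isPositive]
    exact (StarOrderedRing.nonneg_iff_spectrum_nonneg (R := ℝ) _ hBsa).mpr hBspec
  have hinner : ∀ v : H, l1 * ‖v‖ ^ 2 ≤ Complex.re (inner ℂ (A v) v : ℂ) := by
    intro v
    have h := hBpos.inner_nonneg_left v
    have h1 : (inner ℂ ((A - (l1 : ℂ) • 1) v) v : ℂ)
        = inner ℂ (A v) v - ((l1 * ‖v‖ ^ 2 : ℝ) : ℂ) := by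
      simp only [ContinuousLinearMap.sub_apply, ContinuousLinearMap.smul_apply,
        ContinuousLinearMap.one_apply, inner_sub_left, inner_smul_left,
        Complex.conj_ofReal]
      rw [inner_self_eq_norm_sq_to_K, Complex.ofReal_mul, Complex.ofReal_pow]
      norm_num [RCLike.ofReal_alg, Complex.real_smul]
    rw [h1] at h
    have h := (Complex.nonneg_iff.mp h).1
    simp only [Complex.sub_re, Complex.ofReal_re] at h
    linarith
  -- the key eigenvector lemma
  have key : ∀ y ∈ K, A y = (l1 : ℂ) • y := by
    intro y hy
    have hy' := (hmemK y).mp hy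
    have hAy : ‖A y‖ = l1 * ‖y‖ := by
      have h1 : ‖U (A y)‖ = ‖A y‖ := ContinuousLinearMap.norm_map_of_mem_unitary hU (A y)
      have h2 : U (A y) = μ • y := hy'
      rw [h2, norm_smul] at h1
      simp only [hμ] at h1
      linarith
    have hsq : ‖A y - (l1 : ℂ) • y‖ ^ 2 = 0 := by
      have hns := @norm_sub_sq ℂ H _ _ _ (A y) ((l1 : ℂ) • y)
      have hre : Complex.re (inner ℂ (A y) ((l1 : ℂ) • y) : ℂ)
          = l1 * Complex.re (inner ℂ (A y) y : ℂ) := by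
        rw [inner_smul_right]
        simp [Complex.mul_re]
      have hnsm : ‖(l1 : ℂ) • y‖ = l1 * ‖y‖ := by
        rw [norm_smul]; simp [abs_of_pos hl1]
      have hin := hinner y
      simp only [RCLike.re_to_complex] at hns
      rw [hre, hnsm, hAy] at hns
      nlinarith [norm_nonneg (A y - (l1 : ℂ) • y), hin]
    have := pow_eq_zero_iff (n := 2) (by norm_num) |>.mp hsq
    rw [norm_eq_zero, sub_eq_zero] at this
    exact this
  -- U acts as μ/l1 on K
  have keyU : ∀ y ∈ K, U y = (μ / l1) • y := by
    intro y hy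
    have h1 := (hmemK y).mp hy
    have h2 : U ((l1 : ℂ) • y) = μ • y := by rw [← key y hy]; exact h1
    rw [ContinuousLinearMap.map_smul] at h2
    have : U y = ((l1 : ℂ))⁻¹ • μ • y := by
      rw [← h2, smul_smul, inv_mul_cancel₀ hl1', one_smul]
    rw [this, smul_smul]
    congr 1
    rw [div_eq_mul_inv, mul_comm]
  -- adjoint facts
  have hUadj : ContinuousLinearMap.adjoint U * U = 1 := by
    rw [← ContinuousLinearMap.star_eq_adjoint]
    exact Unitary.star_mul_self_of_mem hU
  have keyUadj : ∀ y ∈ K, ContinuousLinearMap.adjoint U y = (↑l1 / μ) • y := by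
    intro y hy
    have h1 : ContinuousLinearMap.adjoint U (U y) = y := by
      have h := congrArg (fun T : H →L[ℂ] H => T y) hUadj
      simpa using h
    rw [keyU y hy, ContinuousLinearMap.map_smul] at h1
    have hc : (μ / (l1 : ℂ)) ≠ 0 := div_ne_zero hμ0 hl1'
    have h2 : ContinuousLinearMap.adjoint U y = (μ / ↑l1)⁻¹ • y := by
      calc ContinuousLinearMap.adjoint U y
          = (μ / ↑l1)⁻¹ • ((μ / ↑l1) • ContinuousLinearMap.adjoint U y) := by
            rw [smul_smul, inv_mul_cancel₀ hc, one_smul]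
        _ = (μ / ↑l1)⁻¹ • y := by rw [h1]
    rw [h2, inv_div]
  refine ⟨key, ?_, ?_, ?_, ?_, ?_⟩
  · intro y hy
    rw [LinearMap.mem_ker]
    simp [key y hy]
  · intro y hy
    have h := (hmemK y).mp hy
    rw [hmemK, key y hy, ContinuousLinearMap.map_smul, h, smul_smul, smul_smul, mul_comm]
  · intro y hy
    rw [keyU y hy]
    exact K.smul_mem _ hy
  · intro z hz
    rw [Submodule.mem_orthogonal]
    intro u hu
    have hadj : (inner ℂ u (A z) : ℂ) = inner ℂ (A u) z := by
      rw [← ContinuousLinearMap.adjoint_inner_left]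
      congr 1
      rw [← ContinuousLinearMap.star_eq_adjoint, hA.star_eq]
    rw [hadj, key u hu, inner_smul_left]
    rw [(Submodule.mem_orthogonal K z).mp hz u hu]
    ring
  · intro z hz
    rw [Submodule.mem_orthogonal]
    intro u hu
    have hadj : (inner ℂ u (U z) : ℂ) = inner ℂ (ContinuousLinearMap.adjoint U u) z :=
      (ContinuousLinearMap.adjoint_inner_left U z u).symm
    rw [hadj, keyUadj u hu, inner_smul_left]
    rw [(Submodule.mem_orthogonal K z).mp hz u hu]
    ring
end

section
/- Let W be the bilateral weighted shift on ℓ²(ℤ) defined by W e_n = w_n e_{n+1}, where w_n = λ₁ for n ≥ 0 and w_n = λ₂ for n ≤ −1, with 0 < λ₁ < λ₂. Then the point spectrum of W equals the open annulus {λ ∈ ℂ : λ₁ < |λ| < λ₂}. -/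
open scoped ENNReal

noncomputable def ev7 (n : ℤ) : lp (fun _ : ℤ => ℂ) 2 →L[ℂ] ℂ :=
  LinearMap.mkContinuous
    { toFun := fun f => f n
      map_add' := fun f g => by simp [lp.coeFn_add]
      map_smul' := fun c f => by simp [lp.coeFn_smul] }
    1 (fun f => by show ‖(f : ∀ _ : ℤ, ℂ) n‖ ≤ 1 * ‖f‖; simpa using lp.norm_apply_le_norm (by norm_num) f n)

theorem ev7_apply (n : ℤ) (f : lp (fun _ : ℤ => ℂ) 2) : ev7 n f = f n := rfl

theorem key7 (l1 l2 : ℝ)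
    (W : lp (fun _ : ℤ => ℂ) 2 →L[ℂ] lp (fun _ : ℤ => ℂ) 2)
    (hW : ∀ n : ℤ, W (lp.single 2 n (1 : ℂ)) =
      (if 0 ≤ n then (l1 : ℂ) else (l2 : ℂ)) • lp.single 2 (n + 1) (1 : ℂ))
    (x : lp (fun _ : ℤ => ℂ) 2) (n : ℤ) :
    (W x : ∀ _ : ℤ, ℂ) n = (if 0 ≤ n - 1 then (l1 : ℂ) else (l2 : ℂ)) * x (n - 1) := by
  haveI : Fact ((1:ℝ≥0∞) ≤ 2) := ⟨by norm_num⟩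
  have hs := lp.hasSum_single (E := fun _ : ℤ => ℂ) (p := 2) (by norm_num) x
  have hs2 := ((ev7 n).comp W).hasSum hs
  have heq : (fun i : ℤ => ((ev7 n).comp W) (lp.single 2 i (x i))) =
      fun i : ℤ => if i = n - 1 then (if 0 ≤ n - 1 then (l1 : ℂ) else (l2 : ℂ)) * x (n - 1)
        else 0 := by
    funext i
    have h1 : lp.single (E := fun _ : ℤ => ℂ) 2 i (x i) = (x i) • lp.single 2 i (1 : ℂ) := by
      rw [← lp.single_smul]; norm_num
    simp only [ContinuousLinearMap.comp_apply, h1, map_smul, hW i, ev7_apply]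
    by_cases hi : i = n - 1
    · subst hi
      have : n - 1 + 1 = n := by ring
      rw [this]
      rw [lp.single_apply_self (E := fun _ : ℤ => ℂ) 2 n (1:ℂ)]
      simp only [smul_eq_mul, mul_one]
      split_ifs <;> ring
    · have : n ≠ i + 1 := by omega
      rw [lp.single_apply_ne (E := fun _ : ℤ => ℂ) 2 (i+1) (1:ℂ) this]
      simp [hi]
  rw [heq] at hs2
  have hs3 : HasSum (fun i : ℤ => if i = n - 1 then
      (if 0 ≤ n - 1 then (l1 : ℂ) else (l2 : ℂ)) * x (n - 1) else 0)
      ((if 0 ≤ n - 1 then (l1 : ℂ) else (l2 : ℂ)) * x (n - 1)) := hasSum_ite_eq _ _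
  have := hs2.unique hs3
  simpa [ev7_apply] using this

theorem noTail7 (x : lp (fun _ : ℤ => ℂ) 2) (g : ℕ → ℤ) (hg : Function.Injective g)
    (c : ℝ) (hc : 0 < c) (h : ∀ k, c ≤ ‖x (g k)‖) : False := by
  have hsum : Summable fun n : ℤ => ‖x n‖ ^ ((2:ℝ≥0∞).toReal) :=
    Memℓp.summable (by norm_num) (lp.memℓp x)
  have htend := hsum.tendsto_cofinite_zero
  have hev := htend.eventually_lt_const (Real.rpow_pos_of_pos hc ((2:ℝ≥0∞).toReal))
  rw [Filter.eventually_cofinite] at hev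
  refine Set.infinite_of_injective_forall_mem (f := g) hg
    (s := {n : ℤ | ¬ ‖x n‖ ^ ((2:ℝ≥0∞).toReal) < c ^ ((2:ℝ≥0∞).toReal)}) ?_ hev
  intro k
  simp only [Set.mem_setOf_eq, not_lt]
  exact Real.rpow_le_rpow hc.le (by simpa using h k) ENNReal.toReal_nonneg

/-- The bilateral weighted shift `W e_n = w_n e_{n+1}` on `ℓ²(ℤ)` with weights
`w_n = λ₁` for `n ≥ 0` and `w_n = λ₂` for `n ≤ −1` (`0 < λ₁ < λ₂`) has point spectrum
exactly the open annulus `{λ : λ₁ < |λ| < λ₂}`. -/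
theorem stmt7 (l1 l2 : ℝ) (hl1 : 0 < l1) (hl12 : l1 < l2)
    (W : lp (fun _ : ℤ => ℂ) 2 →L[ℂ] lp (fun _ : ℤ => ℂ) 2)
    (hW : ∀ n : ℤ, W (lp.single 2 n (1 : ℂ)) =
      (if 0 ≤ n then (l1 : ℂ) else (l2 : ℂ)) • lp.single 2 (n + 1) (1 : ℂ)) :
    {μ : ℂ | ∃ x, x ≠ 0 ∧ W x = μ • x} =
      {μ : ℂ | l1 < ‖μ‖ ∧ ‖μ‖ < l2} := by
  have hl2 : 0 < l2 := hl1.trans hl12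
  ext μ
  simp only [Set.mem_setOf_eq]
  constructor
  · rintro ⟨x, hx0, hWx⟩
    have hco : ∀ n : ℤ, (if 0 ≤ n - 1 then (l1:ℂ) else (l2:ℂ)) * x (n-1) = μ * x n := by
      intro n
      have h1 := key7 l1 l2 W hW x n
      have h2 : (W x : ∀ _:ℤ, ℂ) n = (μ • x : lp (fun _ : ℤ => ℂ) 2) n := by rw [hWx]
      rw [h1] at h2
      rw [h2, lp.coeFn_smul, Pi.smul_apply, smul_eq_mul]
    have hμ : μ ≠ 0 := by
      rintro rfl
      apply hx0
      apply lp.ext; funext m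
      have hm := hco (m+1)
      simp only [add_sub_cancel_right, zero_mul] at hm
      have hw : (if 0 ≤ m then (l1:ℂ) else (l2:ℂ)) ≠ 0 := by
        split_ifs
        · exact Complex.ofReal_ne_zero.mpr hl1.ne'
        · exact Complex.ofReal_ne_zero.mpr hl2.ne'
      have : (x : ∀ _:ℤ, ℂ) m = 0 := by
        rcases mul_eq_zero.mp hm with h | h
        · exact absurd h hw
        · exact h
      simpa [lp.coeFn_zero] using this
    have haμ : 0 < ‖μ‖ := norm_pos_iff.mpr hμ
    have habs : ∀ n : ℤ, (if 0 ≤ n - 1 then l1 else l2) * ‖x (n-1)‖ =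
        ‖μ‖ * ‖x n‖ := by
      intro n
      have h := congrArg (‖·‖) (hco n)
      rw [norm_mul, norm_mul] at h
      have hite : ‖(if 0 ≤ n - 1 then (l1:ℂ) else (l2:ℂ))‖ =
          (if 0 ≤ n - 1 then l1 else l2) := by
        split_ifs
        · rw [Complex.norm_real, Real.norm_eq_abs, abs_of_pos hl1]
        · rw [Complex.norm_real, Real.norm_eq_abs, abs_of_pos hl2]
      rwa [hite] at h
    obtain ⟨n0, hn0⟩ : ∃ n, (x : ∀ _:ℤ, ℂ) n ≠ 0 := by
      by_contra hall; push_neg at hall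
      exact hx0 (lp.ext (funext fun m => by simp [hall m, lp.coeFn_zero]))
    have hx0abs : 0 < ‖x n0‖ := norm_pos_iff.mpr hn0
    constructor
    · by_contra hle; push_neg at hle
      have hmono : ∀ n : ℤ, ‖x (n-1)‖ ≤ ‖x n‖ := by
        intro n
        have h := habs n
        have hw : l1 ≤ (if 0 ≤ n - 1 then l1 else l2) := by split_ifs <;> linarith
        nlinarith [norm_nonneg (x (n-1)), norm_nonneg (x n)]
      have hstep : ∀ k : ℕ, ‖x n0‖ ≤ ‖x (n0 + k)‖ := by
        intro k; induction k with
        | zero => simp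
        | succ m ih =>
          have h := hmono (n0 + (m+1:ℕ))
          have e : (n0 + (m+1:ℕ) : ℤ) - 1 = n0 + m := by push_cast; ring
          rw [e] at h
          exact ih.trans h
      exact absurd (noTail7 x (fun k => n0 + k)
        (fun a b hab => by simp only [add_right_inj, Nat.cast_inj] at hab; exact hab)
        (‖x n0‖) hx0abs hstep) (by simp)
    · by_contra hle; push_neg at hle
      have hmono : ∀ n : ℤ, ‖x n‖ ≤ ‖x (n-1)‖ := by
        intro n
        have h := habs n
        have hw : (if 0 ≤ n - 1 then l1 else l2) ≤ l2 := by split_ifs <;> linarith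
        nlinarith [norm_nonneg (x (n-1)), norm_nonneg (x n)]
      have hstep : ∀ k : ℕ, ‖x n0‖ ≤ ‖x (n0 - k)‖ := by
        intro k; induction k with
        | zero => simp
        | succ m ih =>
          have h := hmono (n0 - m)
          have e : (n0 - m : ℤ) - 1 = n0 - (m+1:ℕ) := by push_cast; ring
          rw [e] at h
          exact ih.trans h
      exact absurd (noTail7 x (fun k => n0 - k)
        (fun a b hab => by simp only [sub_right_inj, Nat.cast_inj] at hab; exact hab)
        (‖x n0‖) hx0abs hstep) (by simp)
  · rintro ⟨h1, h2⟩
    have haμ : 0 < ‖μ‖ := lt_trans hl1 h1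
    have hμ : μ ≠ 0 := by
      intro h; rw [h] at haμ; simp at haμ
    have hane : ((l1:ℂ)/μ) ≠ 0 := div_ne_zero (Complex.ofReal_ne_zero.mpr hl1.ne') hμ
    have hbne : (μ/(l2:ℂ)) ≠ 0 := div_ne_zero hμ (Complex.ofReal_ne_zero.mpr hl2.ne')
    have hl1c : ((l1:ℝ):ℂ) ≠ 0 := Complex.ofReal_ne_zero.mpr hl1.ne'
    have hl2c : ((l2:ℝ):ℂ) ≠ 0 := Complex.ofReal_ne_zero.mpr hl2.ne'
    classical
    set f : ℤ → ℂ := fun n => if 0 ≤ n then ((l1:ℂ)/μ) ^ n else (μ/(l2:ℂ)) ^ (-n) with hf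
    have hnorma : ‖(l1:ℂ)/μ‖ = l1 / ‖μ‖ := by
      rw [norm_div, Complex.norm_real, Real.norm_eq_abs, abs_of_pos hl1]
    have hnormb : ‖μ/(l2:ℂ)‖ = ‖μ‖ / l2 := by
      rw [norm_div, Complex.norm_real, Real.norm_eq_abs, abs_of_pos hl2]
    have hs1 : (l1 / ‖μ‖) < 1 := (div_lt_one haμ).mpr h1
    have hs1' : 0 ≤ l1 / ‖μ‖ := by positivity
    have hr1 : (‖μ‖ / l2) < 1 := (div_lt_one hl2).mpr h2
    have hr1' : 0 ≤ ‖μ‖ / l2 := by positivity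
    have hfmem : Memℓp f 2 := by
      apply memℓp_gen
      have ht : ((2:ℝ≥0∞)).toReal = (2:ℝ) := by norm_num
      simp only [ht]
      apply Summable.of_nat_of_neg
      · have heq : (fun k : ℕ => ‖f (k:ℤ)‖ ^ (2:ℝ)) =
            fun k : ℕ => ((l1 / ‖μ‖)^2) ^ k := by
          funext k
          have : f (k:ℤ) = ((l1:ℂ)/μ) ^ (k:ℤ) := by
            simp [hf, Int.natCast_nonneg]
          rw [this, norm_zpow, zpow_natCast, hnorma, Real.rpow_two, ← pow_mul, ← pow_mul,
            Nat.mul_comm]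
        rw [heq]
        exact summable_geometric_of_lt_one (by positivity) (pow_lt_one₀ hs1' hs1 two_ne_zero)
      · have heq : (fun k : ℕ => ‖f (-(k:ℤ))‖ ^ (2:ℝ)) =
            fun k : ℕ => ((‖μ‖ / l2)^2) ^ k := by
          funext k
          cases k with
          | zero => simp [hf]
          | succ m =>
            have hneg : ¬ (0 ≤ (-(m+1:ℕ) : ℤ)) := by omega
            have : f (-(m+1:ℕ):ℤ) = (μ/(l2:ℂ)) ^ ((m+1:ℕ):ℤ) := by
              simp only [hf, if_neg hneg, neg_neg]
            rw [this, norm_zpow, zpow_natCast, hnormb, Real.rpow_two, ← pow_mul, ← pow_mul,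
              Nat.mul_comm]
        rw [heq]
        exact summable_geometric_of_lt_one (by positivity) (pow_lt_one₀ hr1' hr1 two_ne_zero)
    refine ⟨⟨f, hfmem⟩, ?_, ?_⟩
    · intro h
      have h0 : f 0 = 0 := by
        have := congrArg (fun y : lp (fun _:ℤ=>ℂ) 2 => (y : ∀ _:ℤ, ℂ) 0) h
        simpa [lp.coeFn_zero] using this
      simp [hf] at h0
    · apply lp.ext; funext n
      rw [key7 l1 l2 W hW, lp.coeFn_smul, Pi.smul_apply, smul_eq_mul]
      show (if 0 ≤ n - 1 then (l1:ℂ) else (l2:ℂ)) * f (n-1) = μ * f n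
      rcases lt_trichotomy n 0 with hn | hn | hn
      · have e1 : ¬ (0 ≤ n - 1) := by omega
        have e2 : ¬ (0 ≤ n) := by omega
        simp only [hf, if_neg e1, if_neg e2]
        rw [show -(n-1) = -n + 1 by ring, zpow_add_one₀ hbne]
        have hc : (l2:ℂ) * (μ / (l2:ℂ)) = μ := by field_simp
        calc (l2:ℂ) * ((μ/(l2:ℂ))^(-n) * (μ/(l2:ℂ)))
            = ((l2:ℂ) * (μ/(l2:ℂ))) * (μ/(l2:ℂ))^(-n) := by ring
          _ = μ * (μ/(l2:ℂ))^(-n) := by rw [hc]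
      · subst hn
        simp only [hf]
        norm_num
        rw [← mul_div_assoc]
        exact mul_div_cancel_left₀ μ hl2c
      · have e1 : (0 ≤ n - 1) := by omega
        have e2 : (0 ≤ n) := by omega
        simp only [hf, if_pos e1, if_pos e2]
        rw [zpow_sub_one₀ hane]
        have hc : (l1:ℂ) * ((l1:ℂ)/μ)⁻¹ = μ := by
          rw [inv_div]
          field_simp
        calc (l1:ℂ) * (((l1:ℂ)/μ)^n * ((l1:ℂ)/μ)⁻¹)
            = ((l1:ℂ) * ((l1:ℂ)/μ)⁻¹) * ((l1:ℂ)/μ)^n := by ring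
          _ = μ * ((l1:ℂ)/μ)^n := by rw [hc]
end

section
/- Let n₁, n₂, m₁, m₂ be positive integers and 0 < λ₁ < λ₂ with (λ₁^{n₁}λ₂^{n₂})^{1/(n₁+n₂)} < (λ₁^{m₁}λ₂^{m₂})^{1/(m₁+m₂)}. Let W be the bilateral weighted shift on ℓ²(ℤ) whose weight sequence is (n₁+n₂)-periodic on nonnegative indices with n₁ weights equal to λ₁ followed by n₂ weights equal to λ₂, and (m₁+m₂)-periodic on negative indices with m₂ weights equal to λ₂ followed by m₁ weights equal to λ₁. Then every λ with (λ₁^{n₁}λ₂^{n₂})^{1/(n₁+n₂)} < |λ| < (λ₁^{m₁}λ₂^{m₂})^{1/(m₁+m₂)} is an eigenvalue of W. -/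
open Finset in
private lemma prod_shift_aux (v : ℕ → ℝ) (p : ℕ) (hper : ∀ n, v (n + p) = v n) (n : ℕ) :
    ∏ k ∈ Finset.range (n + p), v k
      = (∏ k ∈ Finset.range p, v k) * ∏ k ∈ Finset.range n, v k := by
  induction n with
  | zero => simp
  | succ n ih =>
    rw [show n + 1 + p = (n + p) + 1 by ring, Finset.prod_range_succ, ih, hper n,
      Finset.prod_range_succ]
    ring

private lemma prod_decomp_aux (v : ℕ → ℝ) (p : ℕ) (hper : ∀ n, v (n + p) = v n) (a b : ℕ) :
    ∏ k ∈ Finset.range (a * p + b), v k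
      = (∏ k ∈ Finset.range p, v k) ^ a * ∏ k ∈ Finset.range b, v k := by
  induction a with
  | zero => simp
  | succ a ih =>
    rw [show (a + 1) * p + b = (a * p + b) + p by ring, prod_shift_aux v p hper, ih]
    ring

private noncomputable def seqA (f g : ℕ → ℝ) (μ : ℂ) : ℤ → ℂ
  | Int.ofNat k => (f k : ℂ) / μ ^ k
  | Int.negSucc k => μ ^ (k + 1) / (g (k + 1) : ℂ)

private lemma seqA_ofNat (f g : ℕ → ℝ) (μ : ℂ) (k : ℕ) :
    seqA f g μ (Int.ofNat k) = (f k : ℂ) / μ ^ k := rfl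

private lemma seqA_negSucc (f g : ℕ → ℝ) (μ : ℂ) (k : ℕ) :
    seqA f g μ (Int.negSucc k) = μ ^ (k + 1) / (g (k + 1) : ℂ) := rfl

set_option maxHeartbeats 1000000 in
/-- Periodic-weight bilateral shift: with weights which are `(n₁+n₂)`-periodic on
nonnegative indices (`n₁` weights `λ₁` followed by `n₂` weights `λ₂`) and
`(m₁+m₂)`-periodic on negative indices (`m₂` weights `λ₂` followed by `m₁` weights `λ₁`),
every `λ` with `(λ₁^{n₁}λ₂^{n₂})^{1/(n₁+n₂)} < |λ| < (λ₁^{m₁}λ₂^{m₂})^{1/(m₁+m₂)}`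
is an eigenvalue of the shift. -/
theorem stmt8 (l1 l2 : ℝ) (hl1 : 0 < l1) (hl12 : l1 < l2)
    (n1 n2 m1 m2 : ℕ) (hn1 : 0 < n1) (hn2 : 0 < n2) (hm1 : 0 < m1) (hm2 : 0 < m2)
    (hgm : (l1 ^ n1 * l2 ^ n2) ^ ((1 : ℝ) / (n1 + n2)) <
      (l1 ^ m1 * l2 ^ m2) ^ ((1 : ℝ) / (m1 + m2)))
    (w : ℤ → ℝ)
    (hwpos : ∀ n : ℤ, 0 ≤ n →
      w n = if n % ((n1 : ℤ) + n2) < (n1 : ℤ) then l1 else l2)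
    (hwneg : ∀ n : ℤ, n < 0 →
      w n = if (-n - 1) % ((m1 : ℤ) + m2) < (m2 : ℤ) then l2 else l1)
    (W : lp (fun _ : ℤ => ℂ) 2 →L[ℂ] lp (fun _ : ℤ => ℂ) 2)
    (hW : ∀ n : ℤ, W (lp.single 2 n (1 : ℂ)) = (w n : ℂ) • lp.single 2 (n + 1) (1 : ℂ))
    (μ : ℂ) (hμ1 : (l1 ^ n1 * l2 ^ n2) ^ ((1 : ℝ) / (n1 + n2)) < ‖μ‖)
    (hμ2 : ‖μ‖ < (l1 ^ m1 * l2 ^ m2) ^ ((1 : ℝ) / (m1 + m2))) :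
    ∃ x, x ≠ 0 ∧ W x = μ • x := by
  have hl2 : 0 < l2 := hl1.trans hl12
  set p : ℕ := n1 + n2 with hp
  set q : ℕ := m1 + m2 with hq
  have hppos : 0 < p := by positivity
  have hqpos : 0 < q := by positivity
  set G1 : ℝ := (l1 ^ n1 * l2 ^ n2) ^ ((1 : ℝ) / (n1 + n2)) with hG1
  set G2 : ℝ := (l1 ^ m1 * l2 ^ m2) ^ ((1 : ℝ) / (m1 + m2)) with hG2
  have hG1pos : 0 < G1 := Real.rpow_pos_of_pos (by positivity) _
  have hG2pos : 0 < G2 := Real.rpow_pos_of_pos (by positivity) _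
  set M : ℝ := ‖μ‖ with hM
  have hMpos : 0 < M := hG1pos.trans hμ1
  have hμ0 : μ ≠ 0 := by
    intro h; rw [h] at hM; simp at hM; exact absurd hM (ne_of_gt hMpos)
  -- weight functions on ℕ
  set vp : ℕ → ℝ := fun k => w k with hvp
  set vn : ℕ → ℝ := fun k => w (-(k + 1 : ℕ)) with hvn
  have hvp_eq : ∀ k : ℕ, vp k = if (k : ℤ) % ((n1 : ℤ) + n2) < (n1 : ℤ) then l1 else l2 := by
    intro k; exact hwpos k (by positivity)
  have hvn_eq : ∀ k : ℕ, vn k = if (k : ℤ) % ((m1 : ℤ) + m2) < (m2 : ℤ) then l2 else l1 := by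
    intro k
    have h1 : (-(k + 1 : ℕ) : ℤ) < 0 := by push_cast; omega
    have := hwneg (-(k + 1 : ℕ)) h1
    rw [hvn]
    simp only at this ⊢
    rw [this]
    congr 1
    push_cast
    ring_nf
  have hvp_mem : ∀ k : ℕ, vp k = l1 ∨ vp k = l2 := by
    intro k; rw [hvp_eq k]; split <;> simp
  have hvn_mem : ∀ k : ℕ, vn k = l1 ∨ vn k = l2 := by
    intro k; rw [hvn_eq k]; split <;> simp
  have hvp_pos : ∀ k : ℕ, 0 < vp k := by
    intro k; rcases hvp_mem k with h | h <;> rw [h] <;> [exact hl1; exact hl2]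
  have hvn_pos : ∀ k : ℕ, 0 < vn k := by
    intro k; rcases hvn_mem k with h | h <;> rw [h] <;> [exact hl1; exact hl2]
  have hvp_le : ∀ k : ℕ, vp k ≤ max 1 l2 := by
    intro k
    rcases hvp_mem k with h | h <;> rw [h]
    · exact le_trans hl12.le (le_max_right _ _)
    · exact le_max_right _ _
  have hvn_ge : ∀ k : ℕ, min 1 l1 ≤ vn k := by
    intro k
    rcases hvn_mem k with h | h <;> rw [h]
    · exact min_le_right _ _
    · exact le_trans (min_le_right _ _) hl12.le
  -- periodicity
  have hvp_per : ∀ k : ℕ, vp (k + p) = vp k := by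
    intro k
    rw [hvp_eq, hvp_eq]
    congr 1
    have h2 : ((k + p : ℕ) : ℤ) = (k : ℤ) + ((n1 : ℤ) + n2) := by rw [hp]; push_cast; ring
    rw [h2, Int.add_emod_right]
  have hvn_per : ∀ k : ℕ, vn (k + q) = vn k := by
    intro k
    rw [hvn_eq, hvn_eq]
    congr 1
    have h2 : ((k + q : ℕ) : ℤ) = (k : ℤ) + ((m1 : ℤ) + m2) := by rw [hq]; push_cast; ring
    rw [h2, Int.add_emod_right]
  -- products
  set Pp : ℕ → ℝ := fun n => ∏ k ∈ Finset.range n, vp k with hPp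
  set Pn : ℕ → ℝ := fun n => ∏ k ∈ Finset.range n, vn k with hPn
  have hPp_pos : ∀ n, 0 < Pp n := fun n => Finset.prod_pos fun k _ => hvp_pos k
  have hPn_pos : ∀ n, 0 < Pn n := fun n => Finset.prod_pos fun k _ => hvn_pos k
  have hPp_succ : ∀ n, Pp (n + 1) = Pp n * vp n := fun n => Finset.prod_range_succ _ n
  have hPn_succ : ∀ n, Pn (n + 1) = Pn n * vn n := fun n => Finset.prod_range_succ _ n
  -- period products
  have hPp_period : Pp p = G1 ^ p := by
    have h1 : Pp p = l1 ^ n1 * l2 ^ n2 := by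
      have e1 : ∏ k ∈ Finset.range n1, vp k = l1 ^ n1 := by
        calc ∏ k ∈ Finset.range n1, vp k = ∏ _k ∈ Finset.range n1, l1 := by
              apply Finset.prod_congr rfl
              intro k hk
              rw [Finset.mem_range] at hk
              rw [hvp_eq, if_pos]
              rw [Int.emod_eq_of_lt (by positivity) (by push_cast; omega)]
              exact_mod_cast hk
          _ = l1 ^ n1 := by rw [Finset.prod_const, Finset.card_range]
      have e2 : ∏ k ∈ Finset.range n2, vp (n1 + k) = l2 ^ n2 := by
        calc ∏ k ∈ Finset.range n2, vp (n1 + k) = ∏ _k ∈ Finset.range n2, l2 := by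
              apply Finset.prod_congr rfl
              intro k hk
              rw [Finset.mem_range] at hk
              rw [hvp_eq, if_neg]
              rw [Int.emod_eq_of_lt (by positivity) (by push_cast; omega)]
              push_cast; omega
          _ = l2 ^ n2 := by rw [Finset.prod_const, Finset.card_range]
      calc Pp p = ∏ k ∈ Finset.range (n1 + n2), vp k := by rw [hPp, hp]
        _ = (∏ k ∈ Finset.range n1, vp k) * ∏ k ∈ Finset.range n2, vp (n1 + k) :=
            Finset.prod_range_add vp n1 n2
        _ = l1 ^ n1 * l2 ^ n2 := by rw [e1, e2]
    rw [h1, hG1]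
    rw [← Real.rpow_natCast ((l1 ^ n1 * l2 ^ n2) ^ ((1:ℝ)/(n1+n2))) p,
      ← Real.rpow_mul (by positivity)]
    rw [show (1:ℝ)/(n1+n2) * (p:ℕ) = 1 by
      rw [hp]; push_cast; field_simp]
    rw [Real.rpow_one]
  have hPn_period : Pn q = l2 ^ m2 * l1 ^ m1 := by
    have e1 : ∏ k ∈ Finset.range m2, vn k = l2 ^ m2 := by
      calc ∏ k ∈ Finset.range m2, vn k = ∏ _k ∈ Finset.range m2, l2 := by
            apply Finset.prod_congr rfl
            intro k hk
            rw [Finset.mem_range] at hk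
            rw [hvn_eq, if_pos]
            rw [Int.emod_eq_of_lt (by positivity) (by push_cast; omega)]
            exact_mod_cast hk
        _ = l2 ^ m2 := by rw [Finset.prod_const, Finset.card_range]
    have e2 : ∏ k ∈ Finset.range m1, vn (m2 + k) = l1 ^ m1 := by
      calc ∏ k ∈ Finset.range m1, vn (m2 + k) = ∏ _k ∈ Finset.range m1, l1 := by
            apply Finset.prod_congr rfl
            intro k hk
            rw [Finset.mem_range] at hk
            rw [hvn_eq, if_neg]
            rw [Int.emod_eq_of_lt (by positivity) (by push_cast; omega)]
            push_cast; omega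
        _ = l1 ^ m1 := by rw [Finset.prod_const, Finset.card_range]
    calc Pn q = ∏ k ∈ Finset.range (m2 + m1), vn k := by rw [hPn, hq]; congr 1; omega
      _ = (∏ k ∈ Finset.range m2, vn k) * ∏ k ∈ Finset.range m1, vn (m2 + k) :=
          Finset.prod_range_add vn m2 m1
      _ = l2 ^ m2 * l1 ^ m1 := by rw [e1, e2]
  have hPn_period' : Pn q = G2 ^ q := by
    rw [hPn_period, hG2]
    rw [← Real.rpow_natCast ((l1 ^ m1 * l2 ^ m2) ^ ((1:ℝ)/(m1+m2))) q,
      ← Real.rpow_mul (by positivity)]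
    rw [show (1:ℝ)/(m1+m2) * (q:ℕ) = 1 by rw [hq]; push_cast; field_simp]
    rw [Real.rpow_one]
    ring
  -- bounds
  set C : ℝ := (max 1 l2) ^ p * (max 1 G1⁻¹) ^ p with hC
  set c : ℝ := (min 1 l1) ^ q * (min 1 G2⁻¹) ^ q with hc
  have hCpos : 0 < C := by positivity
  have hcpos : 0 < c := by
    apply mul_pos <;> apply pow_pos <;> simp [hl1, hG2pos, lt_min_iff, inv_pos]
  have hcle1 : c ≤ 1 := by
    rw [hc]
    exact mul_le_one₀ (pow_le_one₀ (by positivity) (min_le_left _ _))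
      (pow_nonneg (by positivity) _) (pow_le_one₀ (by positivity) (min_le_left _ _))
  have hPp_le : ∀ n : ℕ, Pp n ≤ C * G1 ^ n := by
    intro n
    set A := n / p with hA
    set B := n % p with hB
    have hd : p * A + B = n := by rw [hA, hB]; exact Nat.div_add_mod n p
    have hBlt : B < p := Nat.mod_lt _ hppos
    have hdecomp : Pp n = (G1 ^ p) ^ A * Pp B := by
      rw [← hPp_period]
      have hn' : n = A * p + B := by rw [hA, hB, Nat.mul_comm]; exact (Nat.div_add_mod n p).symm
      rw [hn']
      exact prod_decomp_aux vp p hvp_per A B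
    have hPB : Pp B ≤ (max 1 l2) ^ p := by
      calc Pp B ≤ ∏ _k ∈ Finset.range B, max 1 l2 :=
            Finset.prod_le_prod (fun k _ => (hvp_pos k).le) (fun k _ => hvp_le k)
        _ = (max 1 l2) ^ B := by rw [Finset.prod_const, Finset.card_range]
        _ ≤ (max 1 l2) ^ p := pow_le_pow_right₀ (le_max_left _ _) hBlt.le
    have hGB : (1:ℝ) ≤ G1 ^ B * (max 1 G1⁻¹) ^ p := by
      have h1 : (G1⁻¹) ^ B ≤ (max 1 G1⁻¹) ^ p :=
        le_trans (pow_le_pow_left₀ (by positivity) (le_max_right _ _) B)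
          (pow_le_pow_right₀ (le_max_left _ _) hBlt.le)
      calc (1:ℝ) = G1 ^ B * (G1⁻¹) ^ B := by
            rw [← mul_pow, mul_inv_cancel₀ (ne_of_gt hG1pos), one_pow]
        _ ≤ G1 ^ B * (max 1 G1⁻¹) ^ p := by
            apply mul_le_mul_of_nonneg_left h1 (by positivity)
    calc Pp n = (G1 ^ p) ^ A * Pp B := hdecomp
      _ ≤ (G1 ^ p) ^ A * ((max 1 l2) ^ p * (G1 ^ B * (max 1 G1⁻¹) ^ p)) := by
          apply mul_le_mul_of_nonneg_left _ (by positivity)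
          calc Pp B ≤ (max 1 l2) ^ p := hPB
            _ = (max 1 l2) ^ p * 1 := by ring
            _ ≤ (max 1 l2) ^ p * (G1 ^ B * (max 1 G1⁻¹) ^ p) := by
                apply mul_le_mul_of_nonneg_left hGB (by positivity)
      _ = C * (G1 ^ (p * A) * G1 ^ B) := by rw [hC, ← pow_mul]; ring
      _ = C * G1 ^ n := by rw [← pow_add, hd]
  have hPn_ge : ∀ n : ℕ, c * G2 ^ n ≤ Pn n := by
    intro n
    set A := n / q with hA
    set B := n % q with hB
    have hd : q * A + B = n := by rw [hA, hB]; exact Nat.div_add_mod n q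
    have hBlt : B < q := Nat.mod_lt _ hqpos
    have hdecomp : Pn n = (G2 ^ q) ^ A * Pn B := by
      rw [← hPn_period']
      have hn' : n = A * q + B := by rw [hA, hB, Nat.mul_comm]; exact (Nat.div_add_mod n q).symm
      rw [hn']
      exact prod_decomp_aux vn q hvn_per A B
    have hPB : (min 1 l1) ^ q ≤ Pn B := by
      calc (min 1 l1) ^ q ≤ (min 1 l1) ^ B :=
            pow_le_pow_of_le_one (by positivity) (min_le_left _ _) hBlt.le
        _ = ∏ _k ∈ Finset.range B, min 1 l1 := by rw [Finset.prod_const, Finset.card_range]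
        _ ≤ Pn B := Finset.prod_le_prod (fun k _ => by positivity) (fun k _ => hvn_ge k)
    have hGB : G2 ^ B * (min 1 G2⁻¹) ^ q ≤ 1 := by
      have h1 : (min 1 G2⁻¹) ^ q ≤ (G2⁻¹) ^ B :=
        le_trans (pow_le_pow_of_le_one (by positivity) (min_le_left _ _) hBlt.le)
          (pow_le_pow_left₀ (by positivity) (min_le_right _ _) B)
      calc G2 ^ B * (min 1 G2⁻¹) ^ q ≤ G2 ^ B * (G2⁻¹) ^ B := by
            apply mul_le_mul_of_nonneg_left h1 (by positivity)
        _ = 1 := by rw [← mul_pow, mul_inv_cancel₀ (ne_of_gt hG2pos), one_pow]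
    calc c * G2 ^ n = (G2 ^ q) ^ A * ((min 1 l1) ^ q * (G2 ^ B * (min 1 G2⁻¹) ^ q)) := by
          rw [hc, ← hd, pow_add, ← pow_mul]
          ring
      _ ≤ (G2 ^ q) ^ A * ((min 1 l1) ^ q * 1) := by
          apply mul_le_mul_of_nonneg_left _ (by positivity)
          exact mul_le_mul_of_nonneg_left hGB (by positivity)
      _ = (G2 ^ q) ^ A * (min 1 l1) ^ q := by ring
      _ ≤ (G2 ^ q) ^ A * Pn B := mul_le_mul_of_nonneg_left hPB (by positivity)
      _ = Pn n := hdecomp.symm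
  -- the eigenvector candidate
  set a : ℤ → ℂ := seqA Pp Pn μ with ha
  set r : ℝ := G1 / M with hr
  set s : ℝ := M / G2 with hs
  have hr01 : 0 ≤ r ∧ r < 1 := ⟨by positivity, (div_lt_one hMpos).mpr hμ1⟩
  have hs01 : 0 ≤ s ∧ s < 1 := ⟨by positivity, (div_lt_one hG2pos).mpr hμ2⟩
  have hnorm_pos : ∀ k : ℕ, ‖a (Int.ofNat k)‖ ≤ C * r ^ k := by
    intro k
    rw [ha, seqA_ofNat]
    rw [norm_div, norm_pow, Complex.norm_real, ← hM]
    rw [Real.norm_eq_abs, abs_of_pos (hPp_pos k)]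
    rw [hr, div_pow]
    calc Pp k / M ^ k ≤ C * G1 ^ k / M ^ k := by gcongr; exact hPp_le k
      _ = C * (G1 ^ k / M ^ k) := by ring
  have hnorm_neg : ∀ k : ℕ, ‖a (Int.negSucc k)‖ ≤ c⁻¹ * s ^ (k + 1) := by
    intro k
    rw [ha, seqA_negSucc]
    rw [norm_div, norm_pow, Complex.norm_real, ← hM]
    rw [Real.norm_eq_abs, abs_of_pos (hPn_pos (k + 1))]
    have h1 : M ^ (k + 1) / Pn (k + 1) ≤ M ^ (k + 1) / (c * G2 ^ (k + 1)) :=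
      div_le_div_of_nonneg_left (by positivity) (by positivity) (hPn_ge (k + 1))
    have h2 : c⁻¹ * (M ^ (k + 1) / G2 ^ (k + 1)) = M ^ (k + 1) / (c * G2 ^ (k + 1)) := by
      field_simp
    refine h1.trans (le_of_eq ?_)
    rw [hs, div_pow]
    exact h2.symm
  -- membership in ℓ²
  have htoReal : ((2 : ENNReal)).toReal = (2 : ℝ) := by norm_num
  have hsummable : Summable (fun n : ℤ => ‖a n‖ ^ ((2 : ENNReal)).toReal) := by
    simp only [htoReal]
    have hrpow : ∀ z : ℤ, ‖a z‖ ^ (2:ℝ) = ‖a z‖ ^ (2:ℕ) := by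
      intro z
      rw [show (2:ℝ) = ((2:ℕ):ℝ) by norm_num, Real.rpow_natCast]
    simp only [hrpow]
    apply Summable.of_nat_of_neg_add_one
    · apply Summable.of_nonneg_of_le (fun k => by positivity)
        (f := fun k : ℕ => C ^ 2 * (r ^ 2) ^ k)
      · intro k
        have h1 : ‖a (k : ℤ)‖ ≤ C * r ^ k := hnorm_pos k
        calc ‖a (k:ℤ)‖ ^ (2:ℕ) ≤ (C * r ^ k) ^ (2:ℕ) :=
              pow_le_pow_left₀ (norm_nonneg _) h1 2
          _ = C ^ 2 * (r ^ 2) ^ k := by ring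
      · exact (summable_geometric_of_lt_one (by positivity)
          (by nlinarith [hr01.1, hr01.2])).mul_left _
    · apply Summable.of_nonneg_of_le (fun k => by positivity)
        (f := fun k : ℕ => (c⁻¹ ^ 2 * s ^ 2) * (s ^ 2) ^ k)
      · intro k
        have hneg : (-(((k:ℤ)) + 1)) = Int.negSucc k := by
          rw [Int.negSucc_eq]
        rw [hneg]
        have h1 : ‖a (Int.negSucc k)‖ ≤ c⁻¹ * s ^ (k + 1) := hnorm_neg k
        calc ‖a (Int.negSucc k)‖ ^ (2:ℕ) ≤ (c⁻¹ * s ^ (k + 1)) ^ (2:ℕ) :=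
              pow_le_pow_left₀ (norm_nonneg _) h1 2
          _ = (c⁻¹ ^ 2 * s ^ 2) * (s ^ 2) ^ k := by ring
      · exact (summable_geometric_of_lt_one (by positivity)
          (by nlinarith [hs01.1, hs01.2])).mul_left _
  have hmem : Memℓp a 2 := memℓp_gen hsummable
  set x : lp (fun _ : ℤ => ℂ) 2 := ⟨a, hmem⟩ with hx
  have hx_apply : ∀ n : ℤ, (x : ∀ _ : ℤ, ℂ) n = a n := fun n => rfl
  have ha0 : a 0 = 1 := by
    rw [ha, show (0:ℤ) = Int.ofNat 0 from rfl, seqA_ofNat]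
    simp [hPp]
  have hx0 : x ≠ 0 := by
    intro h
    have : a 0 = 0 := by
      have := congrArg (fun y : lp (fun _ : ℤ => ℂ) 2 => (y : ∀ _ : ℤ, ℂ) 0) h
      simpa using this
    rw [ha0] at this
    exact one_ne_zero this
  -- recurrence
  have hrec : ∀ n : ℤ, (w n : ℂ) * a n = μ * a (n + 1) := by
    intro n
    match n with
    | Int.ofNat k =>
      have h1 : (Int.ofNat k) + 1 = Int.ofNat (k + 1) := rfl
      rw [h1, ha, seqA_ofNat, seqA_ofNat, hPp_succ k]
      have hwk : w (Int.ofNat k) = vp k := rfl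
      rw [hwk]
      have hμk : (μ : ℂ) ^ k ≠ 0 := pow_ne_zero _ hμ0
      field_simp
      push_cast
      ring
    | Int.negSucc 0 =>
      have h1 : (Int.negSucc 0) + 1 = Int.ofNat 0 := rfl
      rw [h1, ha, seqA_negSucc, seqA_ofNat]
      have hwk : w (Int.negSucc 0) = vn 0 := by
        rw [hvn]; congr 1
      rw [hwk]
      have hPn1 : Pn 1 = vn 0 := by rw [show (1:ℕ) = 0 + 1 from rfl, hPn_succ]; simp [hPn]
      rw [hPn1]
      have hv0 : (vn 0 : ℂ) ≠ 0 := by exact_mod_cast (hvn_pos 0).ne'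
      field_simp [hPp]
      simp [hPp]
    | Int.negSucc (k + 1) =>
      have h1 : (Int.negSucc (k + 1)) + 1 = Int.negSucc k := rfl
      rw [h1, ha, seqA_negSucc, seqA_negSucc, hPn_succ (k + 1)]
      have hwk : w (Int.negSucc (k + 1)) = vn (k + 1) := by
        rw [hvn]
        norm_num
        congr 1
        push_cast
        rw [Int.negSucc_eq]
        push_cast
        ring
      rw [hwk]
      have hvk : (vn (k+1) : ℂ) ≠ 0 := by exact_mod_cast (hvn_pos (k+1)).ne'
      have hPnk : (Pn (k+1) : ℂ) ≠ 0 := by exact_mod_cast (hPn_pos (k+1)).ne'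
      push_cast
      field_simp
      ring
  -- sum representation
  have hsum : HasSum (fun n : ℤ => lp.single 2 n (a n)) x :=
    lp.hasSum_single (by norm_num) x
  have hterm : ∀ n : ℤ, W (lp.single 2 n (a n)) = μ • lp.single 2 (n + 1) (a (n + 1)) := by
    intro n
    have e1 : lp.single (E := fun _ : ℤ => ℂ) 2 n (a n) = a n • lp.single 2 n (1 : ℂ) := by
      rw [← lp.single_smul, smul_eq_mul, mul_one]
    have e2 : lp.single (E := fun _ : ℤ => ℂ) 2 (n + 1) (a (n + 1))
        = a (n + 1) • lp.single 2 (n + 1) (1 : ℂ) := by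
      rw [← lp.single_smul, smul_eq_mul, mul_one]
    rw [e1, map_smul, hW n, smul_smul, e2, smul_smul]
    congr 1
    rw [mul_comm (a n)]
    exact hrec n
  have hsum2 : HasSum (fun n : ℤ => lp.single 2 (n + 1) (a (n + 1))) x := by
    have := (Equiv.addRight (1 : ℤ)).hasSum_iff.mpr hsum
    exact this
  have hW_sum : HasSum (fun n : ℤ => W (lp.single 2 n (a n))) (W x) := hsum.mapL W
  have hμ_sum : HasSum (fun n : ℤ => μ • lp.single 2 (n + 1) (a (n + 1))) (μ • x) :=
    hsum2.const_smul μ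
  have hWx : W x = μ • x := by
    apply HasSum.unique _ hμ_sum
    have : (fun n : ℤ => W (lp.single 2 n (a n)))
        = fun n : ℤ => μ • lp.single 2 (n + 1) (a (n + 1)) := funext hterm
    rw [← this]
    exact hW_sum
  exact ⟨x, hx0, hWx⟩
end

section
/- Let (w_n)_{n∈ℤ} be a bounded sequence of positive reals with w_n → λ₁ as n → +∞ and w_n → λ₂ as n → −∞, where 0 < λ₁ < λ₂. Let W be the bilateral weighted shift W e_n = w_n e_{n+1} on ℓ²(ℤ). Then every λ ∈ ℂ with λ₁ < |λ| < λ₂ is an eigenvalue of W. -/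
open Filter
open scoped ENNReal

noncomputable def qseq (w : ℤ → ℝ) (μ : ℂ) : ℕ → ℂ
  | 0 => 1
  | (k+1) => qseq w μ k * (w k : ℂ) / μ

noncomputable def rseq (w : ℤ → ℝ) (μ : ℂ) : ℕ → ℂ
  | 0 => μ / (w (-1) : ℂ)
  | (m+1) => μ * rseq w μ m / (w (-(m+2) : ℤ) : ℂ)

noncomputable def pseq (w : ℤ → ℝ) (μ : ℂ) : ℤ → ℂ
  | Int.ofNat k => qseq w μ k
  | Int.negSucc m => rseq w μ m

lemma qseq_ne_zero (w : ℤ → ℝ) (μ : ℂ) (hw : ∀ n, 0 < w n) (hμ : μ ≠ 0) :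
    ∀ k, qseq w μ k ≠ 0 := by
  intro k
  induction k with
  | zero => simp [qseq]
  | succ k ih =>
    have hwk : (w k : ℂ) ≠ 0 := by exact_mod_cast (hw k).ne'
    simp only [qseq]
    exact div_ne_zero (mul_ne_zero ih hwk) hμ

lemma rseq_ne_zero (w : ℤ → ℝ) (μ : ℂ) (hw : ∀ n, 0 < w n) (hμ : μ ≠ 0) :
    ∀ m, rseq w μ m ≠ 0 := by
  intro m
  induction m with
  | zero =>
    have : (w (-1) : ℂ) ≠ 0 := by exact_mod_cast (hw (-1)).ne'
    simp only [rseq]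
    exact div_ne_zero hμ this
  | succ m ih =>
    have : (w (-(m+2) : ℤ) : ℂ) ≠ 0 := by exact_mod_cast (hw _).ne'
    simp only [rseq]
    exact div_ne_zero (mul_ne_zero hμ ih) this

lemma pseq_ne_zero (w : ℤ → ℝ) (μ : ℂ) (hw : ∀ n, 0 < w n) (hμ : μ ≠ 0) :
    ∀ n, pseq w μ n ≠ 0 := by
  intro n
  cases n with
  | ofNat k => exact qseq_ne_zero w μ hw hμ k
  | negSucc m => exact rseq_ne_zero w μ hw hμ m

lemma pseq_rec (w : ℤ → ℝ) (μ : ℂ) (hw : ∀ n, 0 < w n) (hμ : μ ≠ 0) (n : ℤ) :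
    (w n : ℂ) * pseq w μ n = μ * pseq w μ (n + 1) := by
  cases n with
  | ofNat k =>
    have h1 : (Int.ofNat k) + 1 = Int.ofNat (k+1) := rfl
    rw [h1]
    show (w k : ℂ) * qseq w μ k = μ * qseq w μ (k+1)
    simp only [qseq]
    field_simp
  | negSucc m =>
    cases m with
    | zero =>
      have h1 : (Int.negSucc 0) + 1 = Int.ofNat 0 := rfl
      rw [h1]
      show (w (Int.negSucc 0) : ℂ) * rseq w μ 0 = μ * qseq w μ 0
      have hne : (w (-1) : ℂ) ≠ 0 := by exact_mod_cast (hw (-1)).ne'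
      have : (Int.negSucc 0) = (-1 : ℤ) := rfl
      simp only [rseq, qseq, this]
      field_simp
    | succ m =>
      have h1 : (Int.negSucc (m+1)) + 1 = Int.negSucc m := rfl
      rw [h1]
      show (w (Int.negSucc (m+1)) : ℂ) * rseq w μ (m+1) = μ * rseq w μ m
      have h2 : (Int.negSucc (m+1)) = (-(m+2) : ℤ) := by
        simp [Int.negSucc_eq]; ring
      rw [h2]
      simp only [rseq]
      exact mul_div_cancel₀ _ (by exact_mod_cast (hw (-(m+2) : ℤ)).ne')

set_option maxHeartbeats 1000000 in
/-- If the weights `w_n > 0` are bounded with `w_n → λ₁` as `n → +∞` and `w_n → λ₂` as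
`n → −∞` (`0 < λ₁ < λ₂`), then every `λ` with `λ₁ < |λ| < λ₂` is an eigenvalue of the
bilateral weighted shift `W e_n = w_n e_{n+1}` on `ℓ²(ℤ)`. -/
theorem stmt10 (l1 l2 : ℝ) (hl1 : 0 < l1) (hl12 : l1 < l2)
    (w : ℤ → ℝ) (hwpos : ∀ n : ℤ, 0 < w n) (hbdd : ∃ C : ℝ, ∀ n : ℤ, w n ≤ C)
    (htop : Tendsto (fun n : ℕ => w (n : ℤ)) atTop (nhds l1))
    (hbot : Tendsto (fun n : ℕ => w (-(n : ℤ))) atTop (nhds l2))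
    (W : lp (fun _ : ℤ => ℂ) 2 →L[ℂ] lp (fun _ : ℤ => ℂ) 2)
    (hW : ∀ n : ℤ, W (lp.single 2 n (1 : ℂ)) = (w n : ℂ) • lp.single 2 (n + 1) (1 : ℂ))
    (μ : ℂ) (hμ1 : l1 < ‖μ‖) (hμ2 : ‖μ‖ < l2) :
    ∃ x, x ≠ 0 ∧ W x = μ • x := by
  have hμabs : 0 < ‖μ‖ := lt_trans hl1 hμ1
  have hμ : μ ≠ 0 := by
    simpa using (norm_pos_iff.mp hμabs)
  set p : ℤ → ℂ := pseq w μ with hp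
  have hpne : ∀ n, p n ≠ 0 := pseq_ne_zero w μ hwpos hμ
  have hrec : ∀ n : ℤ, (w n : ℂ) * p n = μ * p (n + 1) := pseq_rec w μ hwpos hμ
  have hnormrec : ∀ n : ℤ, w n * ‖p n‖ = ‖μ‖ * ‖p (n+1)‖ := by
    intro n
    have := congrArg norm (hrec n)
    simpa [norm_mul, Complex.norm_real, Real.norm_eq_abs, abs_of_pos (hwpos n)] using this
  have hnormpos : ∀ n : ℤ, 0 < ‖p n‖ := fun n => norm_pos_iff.mpr (hpne n)
  -- ratio as a division
  have hratio : ∀ n : ℤ, ‖p (n+1)‖ ^ 2 / ‖p n‖ ^ 2 = (w n / ‖μ‖) ^ 2 := by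
    intro n
    rw [← div_pow]
    congr 1
    rw [div_eq_div_iff (hnormpos n).ne' hμabs.ne']
    linarith [hnormrec n]
  have hratio' : ∀ n : ℤ, ‖p n‖ ^ 2 / ‖p (n+1)‖ ^ 2 = (‖μ‖ / w n) ^ 2 := by
    intro n
    rw [← div_pow]
    congr 1
    rw [div_eq_div_iff (hnormpos (n+1)).ne' (hwpos n).ne']
    linarith [hnormrec n]
  -- summability of ‖p n‖^2 over ℤ
  have hsum : Summable (fun n : ℤ => ‖p n‖ ^ 2) := by
    apply Summable.of_nat_of_neg
    · apply summable_of_ratio_test_tendsto_lt_one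
        (l := (l1 / ‖μ‖)^2)
      · have h1 : l1 / ‖μ‖ < 1 := (div_lt_one hμabs).mpr hμ1
        have h0 : 0 ≤ l1 / ‖μ‖ := by positivity
        nlinarith
      · filter_upwards with n
        exact pow_ne_zero _ (hnormpos _).ne'
      · have htend : Tendsto (fun n : ℕ => (w n / ‖μ‖)^2) atTop
            (nhds ((l1 / ‖μ‖)^2)) := (htop.div_const _).pow 2
        refine htend.congr fun n => ?_
        rw [Real.norm_of_nonneg (by positivity), Real.norm_of_nonneg (by positivity)]
        rw [← hratio (n : ℤ)]
        push_cast
        ring_nf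
    · apply summable_of_ratio_test_tendsto_lt_one
        (l := (‖μ‖ / l2)^2)
      · have h1 : ‖μ‖ / l2 < 1 := (div_lt_one (lt_trans hl1 hl12)).mpr hμ2
        have h0 : 0 ≤ ‖μ‖ / l2 := div_nonneg (norm_nonneg μ) (by linarith)
        nlinarith
      · filter_upwards with n
        exact pow_ne_zero _ (hnormpos _).ne'
      · have hb : Tendsto (fun n : ℕ => w (-((n:ℤ)+1))) atTop (nhds l2) := by
          have h := hbot.comp (tendsto_add_atTop_nat 1)
          refine h.congr fun n => ?_
          simp only [Function.comp]
          congr 1 <;> omega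
        have htend : Tendsto (fun n : ℕ => (‖μ‖ / w (-((n:ℤ)+1)))^2) atTop
            (nhds ((‖μ‖ / l2)^2)) :=
          (tendsto_const_nhds.div hb (lt_trans hl1 hl12).ne').pow 2
        refine htend.congr fun n => ?_
        rw [Real.norm_of_nonneg (by positivity), Real.norm_of_nonneg (by positivity)]
        have he : (-((n:ℤ)+1)) + 1 = -(n:ℤ) := by ring
        have := hratio' (-((n:ℤ)+1))
        rw [he] at this
        rw [← this]
        have h1 : (-((n:ℕ)+1 : ℕ) : ℤ) = -((n:ℤ)+1) := by push_cast; ring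
        rw [h1]
  have hmem : Memℓp p 2 := by
    apply memℓp_gen
    have h2 : (2 : ℝ≥0∞).toReal = 2 := by norm_num
    rw [h2]
    refine hsum.congr fun n => ?_
    rw [← Real.rpow_natCast ‖p n‖ 2]
    norm_num
  haveI : Fact ((1:ℝ≥0∞) ≤ 2) := ⟨by norm_num⟩
  refine ⟨⟨p, hmem⟩, ?_, ?_⟩
  · intro h
    apply hpne 0
    have := congrArg Subtype.val h
    exact congrFun this 0
  · have hx_sum : HasSum (fun n : ℤ => lp.single 2 n (p n))
        (⟨p, hmem⟩ : lp (fun _ : ℤ => ℂ) 2) :=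
      lp.hasSum_single (by norm_num) (⟨p, hmem⟩ : lp (fun _ : ℤ => ℂ) 2)
    have hterm : ∀ n : ℤ, W (lp.single 2 n (p n)) = μ • lp.single 2 (n+1) (p (n+1)) := by
      intro n
      calc W (lp.single 2 n (p n))
          = W (p n • lp.single 2 n (1:ℂ)) := by
            rw [show (p n : ℂ) = p n • (1:ℂ) by simp, lp.single_smul]
            norm_num
        _ = p n • ((w n : ℂ) • lp.single 2 (n+1) (1:ℂ)) := by rw [map_smul, hW n]
        _ = ((w n : ℂ) * p n) • lp.single 2 (n+1) (1:ℂ) := by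
            rw [smul_smul, mul_comm]
        _ = (μ * p (n+1)) • lp.single 2 (n+1) (1:ℂ) := by rw [hrec n]
        _ = μ • lp.single 2 (n+1) (p (n+1)) := by
            rw [← smul_smul, ← lp.single_smul, smul_eq_mul, mul_one]
    have hWx : HasSum (fun n : ℤ => W (lp.single 2 n (p n)))
        (W (⟨p, hmem⟩ : lp (fun _ : ℤ => ℂ) 2)) := W.hasSum hx_sum
    rw [funext hterm] at hWx
    have hshift : HasSum (fun n : ℤ => lp.single 2 (n+1) (p (n+1)))
        (⟨p, hmem⟩ : lp (fun _ : ℤ => ℂ) 2) :=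
      (Equiv.addRight (1:ℤ)).hasSum_iff.mpr hx_sum
    exact hWx.unique (hshift.const_smul μ)
end

section
/- Let (w_n)_{n∈ℤ} be a bounded sequence of positive reals with w_n ≥ λ₁ for all n ≥ 0 and w_n ≤ λ₂ for all n ≤ −1, where 0 < λ₁ < λ₂, and w_n → λ₁ (n → +∞), w_n → λ₂ (n → −∞). Then the point spectrum of the bilateral weighted shift W e_n = w_n e_{n+1} on ℓ²(ℤ) is exactly the open annulus {λ : λ₁ < |λ| < λ₂}. -/
open Filter

open scoped ENNReal

noncomputable def evec (w : ℤ → ℝ) (μ : ℂ) : ℤ → ℂ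
  | (m : ℕ) => ∏ k ∈ Finset.range m, ((w k : ℂ) / μ)
  | Int.negSucc m => ∏ k ∈ Finset.range (m + 1), (μ / (w (-(k + 1)) : ℂ))

lemma evec_zero (w : ℤ → ℝ) (μ : ℂ) : evec w μ 0 = 1 := by
  show evec w μ (Int.ofNat 0) = 1
  simp [evec]

lemma evec_rec (w : ℤ → ℝ) (μ : ℂ) (hw : ∀ n : ℤ, (w n : ℂ) ≠ 0) (hμ : μ ≠ 0) :
    ∀ n : ℤ, evec w μ (n + 1) = ((w n : ℂ) / μ) * evec w μ n := by
  intro n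
  cases n with
  | ofNat m =>
    have h1 : (Int.ofNat m) + 1 = Int.ofNat (m + 1) := by simp
    rw [h1]
    show ∏ k ∈ Finset.range (m + 1), ((w k : ℂ) / μ)
      = ((w (Int.ofNat m) : ℂ) / μ) * ∏ k ∈ Finset.range m, ((w k : ℂ) / μ)
    rw [Finset.prod_range_succ]
    simp only [Int.ofNat_eq_coe]
    ring
  | negSucc m =>
    cases m with
    | zero =>
      have h1 : Int.negSucc 0 + 1 = Int.ofNat 0 := by decide
      rw [h1]
      show (1 : ℂ) = ((w (Int.negSucc 0) : ℂ) / μ) * ∏ k ∈ Finset.range 1, (μ / (w (-(k + 1)) : ℂ))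
      rw [Finset.prod_range_one]
      have h2 : Int.negSucc 0 = -((0 : ℕ) + 1 : ℤ) := by decide
      rw [h2]
      rw [div_mul_div_comm, mul_comm, ← div_mul_div_comm, div_self hμ, one_mul,
        div_self (hw _)]
    | succ m =>
      have h1 : Int.negSucc (m + 1) + 1 = Int.negSucc m := by
        rw [Int.negSucc_eq, Int.negSucc_eq]; push_cast; ring
      rw [h1]
      show ∏ k ∈ Finset.range (m + 1), (μ / (w (-(k + 1)) : ℂ))
        = ((w (Int.negSucc (m + 1)) : ℂ) / μ)
          * ∏ k ∈ Finset.range (m + 1 + 1), (μ / (w (-(k + 1)) : ℂ))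
      conv_rhs => rw [Finset.prod_range_succ]
      have h2 : -(((m + 1 : ℕ) : ℤ) + 1) = Int.negSucc (m + 1) := by
        rw [Int.negSucc_eq]
      rw [h2]
      rw [mul_comm (((w (Int.negSucc (m + 1)) : ℂ)) / μ), mul_assoc, div_mul_div_comm,
        mul_comm (w (Int.negSucc (m + 1)) : ℂ) μ, ← div_mul_div_comm, div_self hμ,
        div_self (hw _), mul_one, mul_one]

lemma shift_coord (w : ℤ → ℝ) (μ : ℂ)
    (W : lp (fun _ : ℤ => ℂ) 2 →L[ℂ] lp (fun _ : ℤ => ℂ) 2)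
    (hW : ∀ n : ℤ, W (lp.single 2 n (1 : ℂ)) = (w n : ℂ) • lp.single 2 (n + 1) (1 : ℂ))
    (x : lp (fun _ : ℤ => ℂ) 2) (hx : W x = μ • x) :
    ∀ n : ℤ, μ * x (n + 1) = (w n : ℂ) * x n := by
  have h1 : HasSum (fun i : ℤ => lp.single 2 i (x i)) x := lp.hasSum_single ENNReal.ofNat_ne_top x
  have h2 : HasSum (fun k : ℤ => ((x k) * (w k : ℂ)) • lp.single 2 (k + 1) (1 : ℂ)) (W x) := by
    have h := h1.mapL W
    convert h using 2 with k
    rw [show lp.single (E := fun _ : ℤ => ℂ) 2 k (x k) = (x k) • lp.single 2 k 1 by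
      rw [← lp.single_smul]; norm_num]
    rw [map_smul, hW, smul_smul]
  intro n
  have h4 := h2.mapL (innerSL ℂ (lp.single 2 (n + 1) (1 : ℂ)))
  have h5 : ∀ k : ℤ, innerSL ℂ (lp.single (E := fun _ : ℤ => ℂ) 2 (n + 1) (1 : ℂ))
      (((x k) * (w k : ℂ)) • lp.single 2 (k + 1) (1 : ℂ))
      = if k = n then x n * (w n : ℂ) else 0 := by
    intro k
    rw [innerSL_apply_apply, inner_smul_right, lp.inner_single_left]
    by_cases hk : k = n
    · subst hk; simp [lp.single_apply_self, RCLike.inner_apply]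
    · rw [if_neg hk, lp.single_apply_ne]
      · simp
      · intro hc; exact hk (by omega)
  rw [funext h5] at h4
  have h6 := h4.unique (hasSum_ite_eq n (x n * (w n : ℂ)))
  rw [innerSL_apply_apply, hx, inner_smul_right, lp.inner_single_left] at h6
  simp only [RCLike.inner_apply, map_one, one_mul, mul_one] at h6
  rw [h6]; ring

lemma lb_not_summable {x : ℤ → ℂ} {c : ℝ} (hc : 0 < c) (g : ℕ → ℤ)
    (hg : Function.Injective g) (h : ∀ k : ℕ, c ≤ ‖x (g k)‖) :
    ¬ Summable (fun n : ℤ => ‖x n‖ ^ (2 : ℝ)) := by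
  intro hs
  have h1 : ∀ᶠ n in cofinite, ‖x n‖ ^ (2 : ℝ) < c ^ (2 : ℝ) :=
    hs.tendsto_cofinite_zero.eventually_lt_const (by positivity)
  rw [eventually_cofinite] at h1
  have h3 : Set.range g ⊆ {n : ℤ | ¬ ‖x n‖ ^ (2 : ℝ) < c ^ (2 : ℝ)} := by
    rintro _ ⟨k, rfl⟩
    exact not_lt.2 (Real.rpow_le_rpow hc.le (h k) (by norm_num))
  exact (Set.infinite_range_of_injective hg) (h1.subset h3)

/-- If the weights satisfy `w_n ≥ λ₁` for `n ≥ 0`, `w_n ≤ λ₂` for `n ≤ −1`, with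
`w_n → λ₁` as `n → +∞` and `w_n → λ₂` as `n → −∞` (`0 < λ₁ < λ₂`), then the point
spectrum of the bilateral weighted shift `W e_n = w_n e_{n+1}` on `ℓ²(ℤ)` is exactly
the open annulus `{λ : λ₁ < |λ| < λ₂}`. -/
theorem stmt11 (l1 l2 : ℝ) (hl1 : 0 < l1) (hl12 : l1 < l2)
    (w : ℤ → ℝ) (hwpos : ∀ n : ℤ, 0 < w n) (hbdd : ∃ C : ℝ, ∀ n : ℤ, w n ≤ C)
    (hge : ∀ n : ℤ, 0 ≤ n → l1 ≤ w n) (hle : ∀ n : ℤ, n < 0 → w n ≤ l2)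
    (htop : Tendsto (fun n : ℕ => w (n : ℤ)) atTop (nhds l1))
    (hbot : Tendsto (fun n : ℕ => w (-(n : ℤ))) atTop (nhds l2))
    (W : lp (fun _ : ℤ => ℂ) 2 →L[ℂ] lp (fun _ : ℤ => ℂ) 2)
    (hW : ∀ n : ℤ, W (lp.single 2 n (1 : ℂ)) = (w n : ℂ) • lp.single 2 (n + 1) (1 : ℂ)) :
    {μ : ℂ | ∃ x, x ≠ 0 ∧ W x = μ • x} =
      {μ : ℂ | l1 < ‖μ‖ ∧ ‖μ‖ < l2} := by
  have hwC : ∀ n : ℤ, (w n : ℂ) ≠ 0 := fun n => by exact_mod_cast (hwpos n).ne'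
  ext μ
  simp only [Set.mem_setOf_eq]
  constructor
  · rintro ⟨x, hx0, hxe⟩
    have hrec := shift_coord w μ W hW x hxe
    have hμ0 : μ ≠ 0 := by
      rintro rfl
      apply hx0
      have hz : ∀ n : ℤ, x n = 0 := by
        intro n
        have h := hrec n
        rw [zero_mul] at h
        rcases mul_eq_zero.1 h.symm with h' | h'
        · exact absurd h' (hwC n)
        · exact h'
      apply Subtype.ext
      funext n
      exact hz n
    have hμpos : 0 < ‖μ‖ := norm_pos_iff.2 hμ0
    obtain ⟨m₀, hm₀⟩ : ∃ m, x m ≠ 0 := by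
      by_contra h
      push_neg at h
      exact hx0 (Subtype.ext (funext h))
    have up : ∀ k : ℕ, x (m₀ + k) ≠ 0 := by
      intro k
      induction k with
      | zero => simpa using hm₀
      | succ k ih =>
        intro h0
        have hr := hrec (m₀ + k)
        rw [show (m₀ + (k : ℤ)) + 1 = m₀ + ((k + 1 : ℕ) : ℤ) by push_cast; ring, h0,
          mul_zero] at hr
        rcases mul_eq_zero.1 hr.symm with h' | h'
        · exact hwC _ h'
        · exact ih h'
    have down : ∀ k : ℕ, x (m₀ - k) ≠ 0 := by
      intro k
      induction k with
      | zero => simpa using hm₀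
      | succ k ih =>
        intro h0
        have hr := hrec (m₀ - ((k + 1 : ℕ) : ℤ))
        rw [show m₀ - ((k + 1 : ℕ) : ℤ) + 1 = m₀ - (k : ℤ) by push_cast; ring, h0,
          mul_zero] at hr
        rcases mul_eq_zero.1 hr with h' | h'
        · exact hμ0 h'
        · exact ih h'
    have hall : ∀ n : ℤ, x n ≠ 0 := by
      intro n
      rcases le_or_gt m₀ n with h | h
      · have := up (n - m₀).toNat
        rwa [show m₀ + ((n - m₀).toNat : ℤ) = n by omega] at this
      · have := down (m₀ - n).toNat
        rwa [show m₀ - ((m₀ - n).toNat : ℤ) = n by omega] at this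
    have hx0' : 0 < ‖x 0‖ := norm_pos_iff.2 (hall 0)
    have hs : Summable (fun n : ℤ => ‖x n‖ ^ (2 : ℝ)) := by
      have h := lp.memℓp x
      rw [memℓp_gen_iff (by norm_num)] at h
      simpa using h
    have nrec : ∀ n : ℤ, ‖μ‖ * ‖x (n + 1)‖ = w n * ‖x n‖ := by
      intro n
      have h := congrArg norm (hrec n)
      rwa [norm_mul, norm_mul, Complex.norm_real, Real.norm_of_nonneg (hwpos n).le] at h
    constructor
    · by_contra hc
      push_neg at hc
      have mono : ∀ k : ℕ, ‖x 0‖ ≤ ‖x (k : ℤ)‖ := by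
        intro k
        induction k with
        | zero => simp
        | succ k ih =>
          have h1 := nrec k
          have h2 : ‖μ‖ * ‖x ((k : ℤ))‖ ≤ ‖μ‖ * ‖x ((k : ℤ) + 1)‖ := by
            rw [h1]
            exact mul_le_mul_of_nonneg_right
              (hc.trans (hge k (Int.natCast_nonneg k))) (norm_nonneg _)
          have h3 := le_of_mul_le_mul_left h2 hμpos
          rw [show ((k : ℤ) + 1) = ((k + 1 : ℕ) : ℤ) by push_cast; ring] at h3
          exact ih.trans h3
      exact lb_not_summable hx0' (fun k => (k : ℤ)) (fun a b h => Int.natCast_inj.mp h) mono hs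
    · by_contra hc
      push_neg at hc
      have mono : ∀ k : ℕ, ‖x 0‖ ≤ ‖x (-(k : ℤ))‖ := by
        intro k
        induction k with
        | zero => simp
        | succ k ih =>
          have h1 := nrec (-(k + 1 : ℕ) : ℤ)
          rw [show (-(k + 1 : ℕ) : ℤ) + 1 = -(k : ℤ) by push_cast; ring] at h1
          have h2 : ‖μ‖ * ‖x (-(k : ℤ))‖ ≤ ‖μ‖ * ‖x (-(k + 1 : ℕ) : ℤ)‖ := by
            rw [h1]
            exact mul_le_mul_of_nonneg_right
              ((hle _ (by omega)).trans hc) (norm_nonneg _)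
          have h3 := le_of_mul_le_mul_left h2 hμpos
          exact ih.trans h3
      exact lb_not_summable hx0' (fun k => -(k : ℤ))
        (fun a b h => Int.natCast_inj.mp (neg_injective h)) mono hs
  · rintro ⟨h1, h2⟩
    have hμ0 : μ ≠ 0 := by
      intro h; rw [h] at h1; simp at h1; linarith
    have hμpos : 0 < ‖μ‖ := norm_pos_iff.2 hμ0
    set f := evec w μ with hf
    have frec : ∀ n : ℤ, f (n + 1) = ((w n : ℂ) / μ) * f n := evec_rec w μ hwC hμ0
    have nrec : ∀ n : ℤ, ‖f (n + 1)‖ = (w n / ‖μ‖) * ‖f n‖ := by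
      intro n
      rw [frec n, norm_mul, norm_div, Complex.norm_real, Real.norm_of_nonneg (hwpos n).le]
    have hsp : Summable (fun m : ℕ => ‖f (m : ℤ)‖ ^ 2) := by
      apply summable_of_ratio_norm_eventually_le (r := ((l1 + ‖μ‖) / (2 * ‖μ‖)) ^ 2)
      · apply pow_lt_one₀ (by positivity) _ two_ne_zero
        rw [div_lt_one (by positivity)]
        linarith
      · filter_upwards [htop.eventually_lt_const (show l1 < (l1 + ‖μ‖) / 2 by linarith)]
          with m hm
        rw [Real.norm_of_nonneg (by positivity), Real.norm_of_nonneg (by positivity)]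
        have e1 : ((m + 1 : ℕ) : ℤ) = (m : ℤ) + 1 := by push_cast; ring
        rw [e1, nrec m, mul_pow]
        apply mul_le_mul_of_nonneg_right _ (by positivity)
        apply pow_le_pow_left₀ (div_nonneg (hwpos _).le hμpos.le)
        rw [div_le_div_iff₀ hμpos (by positivity)]
        calc w (m : ℤ) * (2 * ‖μ‖) ≤ ((l1 + ‖μ‖) / 2) * (2 * ‖μ‖) := by
              apply mul_le_mul_of_nonneg_right hm.le (by positivity)
          _ = (l1 + ‖μ‖) * ‖μ‖ := by ring
    have frecneg : ∀ m : ℕ, f (-(m + 1 : ℕ) : ℤ) = (μ / (w (-(m + 1 : ℕ) : ℤ) : ℂ)) * f (-(m : ℤ)) := by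
      intro m
      have h := frec (-(m + 1 : ℕ) : ℤ)
      rw [show (-(m + 1 : ℕ) : ℤ) + 1 = -(m : ℤ) by push_cast; ring] at h
      rw [h, ← mul_assoc, div_mul_div_comm, mul_comm μ _, ← div_mul_div_comm,
        div_self (hwC _), one_mul, div_self hμ0, one_mul]
    have nrecneg : ∀ m : ℕ, ‖f (-(m + 1 : ℕ) : ℤ)‖ = (‖μ‖ / w (-(m + 1 : ℕ) : ℤ)) * ‖f (-(m : ℤ))‖ := by
      intro m
      rw [frecneg m, norm_mul, norm_div, Complex.norm_real,
        Real.norm_of_nonneg (hwpos _).le]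
    have hsn : Summable (fun m : ℕ => ‖f (-(m : ℤ))‖ ^ 2) := by
      apply summable_of_ratio_norm_eventually_le (r := (2 * ‖μ‖ / (l2 + ‖μ‖)) ^ 2)
      · apply pow_lt_one₀ (div_nonneg (by positivity) (by linarith)) _ two_ne_zero
        rw [div_lt_one (by linarith)]
        linarith
      · have htail : Tendsto (fun m : ℕ => w (-(m + 1 : ℕ) : ℤ)) atTop (nhds l2) :=
          hbot.comp (tendsto_add_atTop_nat 1)
        filter_upwards [htail.eventually_const_lt (show (l2 + ‖μ‖) / 2 < l2 by linarith)]
          with m hm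
        rw [Real.norm_of_nonneg (by positivity), Real.norm_of_nonneg (by positivity)]
        rw [nrecneg m, mul_pow]
        apply mul_le_mul_of_nonneg_right _ (by positivity)
        apply pow_le_pow_left₀ (div_nonneg hμpos.le (hwpos _).le)
        rw [div_le_div_iff₀ (hwpos _) (by linarith)]
        calc ‖μ‖ * (l2 + ‖μ‖) = ((l2 + ‖μ‖) / 2) * (2 * ‖μ‖) := by ring
          _ ≤ w (-(m + 1 : ℕ) : ℤ) * (2 * ‖μ‖) := by
              apply mul_le_mul_of_nonneg_right hm.le (by positivity)
          _ = 2 * ‖μ‖ * w (-(m + 1 : ℕ) : ℤ) := by ring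
    have hsint : Summable (fun n : ℤ => ‖f n‖ ^ 2) := Summable.of_nat_of_neg hsp hsn
    have hmem : Memℓp f 2 := by
      apply memℓp_gen
      convert hsint using 2 with n
      rw [show ((2 : ℝ≥0∞)).toReal = ((2 : ℕ) : ℝ) by simp, Real.rpow_natCast]
    refine ⟨⟨f, hmem⟩, ?_, ?_⟩
    · intro h0
      have h := congrArg (fun y : lp (fun _ : ℤ => ℂ) 2 => y 0) h0
      simp only at h
      rw [hf, evec_zero] at h
      simp only [lp.coeFn_zero, Pi.zero_apply] at h
      exact one_ne_zero h
    · set x : lp (fun _ : ℤ => ℂ) 2 := ⟨f, hmem⟩ with hx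
      have hcoef : ∀ n : ℤ, (x n : ℂ) = f n := fun n => rfl
      have h1 : HasSum (fun i : ℤ => lp.single 2 i (f i)) x := by
        have := lp.hasSum_single ENNReal.ofNat_ne_top x
        simpa [hcoef] using this
      have h2 : HasSum (fun k : ℤ => ((f k) * (w k : ℂ)) • lp.single 2 (k + 1) (1 : ℂ)) (W x) := by
        have h := h1.mapL W
        convert h using 2 with k
        rw [show lp.single (E := fun _ : ℤ => ℂ) 2 k (f k) = (f k) • lp.single 2 k 1 by
          rw [← lp.single_smul]; norm_num]
        rw [map_smul, hW, smul_smul]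
      have key : ∀ n : ℤ, f n * (w n : ℂ) = μ * f (n + 1) := by
        intro n
        rw [frec n]
        field_simp
      have h3 : HasSum (fun n : ℤ => μ • lp.single 2 (n + 1) (f (n + 1))) (W x) := by
        convert h2 using 2 with n
        rw [show lp.single (E := fun _ : ℤ => ℂ) 2 (n + 1) (f (n + 1))
            = (f (n + 1)) • lp.single 2 (n + 1) 1 by rw [← lp.single_smul]; norm_num,
          smul_smul, ← key n]
      have h4 : HasSum ((fun n : ℤ => lp.single (E := fun _ : ℤ => ℂ) 2 n (f n))
          ∘ (Equiv.addRight (1 : ℤ))) x := (Equiv.hasSum_iff _).2 h1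
      have h4' : HasSum (fun n : ℤ => lp.single (E := fun _ : ℤ => ℂ) 2 (n + 1) (f (n + 1))) x := h4
      exact h3.unique (h4'.const_smul μ)
end

section
/- Let (t_k)_{k≥1} and (r_k)_{k≥1} be sequences of positive reals with t_k < t_{k+1} < λ₁ < r_{k+1} < r_k, t_k → λ₁, r_k → λ₁, and Σ_{n≥1} Π_{k=1}^{n} (t_k/λ₁)² < ∞ and Σ_{n≥1} Π_{k=1}^{n} (λ₁/r_k)² < ∞. Define weights w_n = t_{n+1} for n ≥ 0 and w_n = r_{-n} for n ≤ −1, and let W be the bilateral weighted shift W e_n = w_n e_{n+1} on ℓ²(ℤ). Then every λ ∈ ℂ with |λ| = λ₁ is an eigenvalue of W. -/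
open Filter

private lemma prod_Icc_one_eq_range (g : ℕ → ℝ) (m : ℕ) :
    ∏ k ∈ Finset.Icc 1 m, g k = ∏ k ∈ Finset.range m, g (k + 1) := by
  induction m with
  | zero => simp
  | succ m ih =>
    rw [Finset.prod_Icc_succ_top (by omega), ih, Finset.prod_range_succ]

set_option maxHeartbeats 1000000 in
/-- Scalar model of Corollary 4.4: with `t_k ↑ λ₁`, `r_k ↓ λ₁`, and the products
`Π(t_k/λ₁)²`, `Π(λ₁/r_k)²` summable, the bilateral weighted shift with weights
`w_n = t_{n+1}` for `n ≥ 0` and `w_n = r_{−n}` for `n ≤ −1` has every `λ` with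
`|λ| = λ₁` as an eigenvalue. -/
theorem stmt12 (l1 : ℝ) (hl1 : 0 < l1) (t r : ℕ → ℝ)
    (htpos : ∀ k, 1 ≤ k → 0 < t k)
    (htmono : ∀ k, 1 ≤ k → t k < t (k + 1)) (htlt : ∀ k, 1 ≤ k → t k < l1)
    (hrmono : ∀ k, 1 ≤ k → r (k + 1) < r k) (hrgt : ∀ k, 1 ≤ k → l1 < r k)
    (htlim : Tendsto t atTop (nhds l1)) (hrlim : Tendsto r atTop (nhds l1))
    (htsum : Summable (fun n : ℕ => ∏ k ∈ Finset.Icc 1 n, (t k / l1) ^ 2))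
    (hrsum : Summable (fun n : ℕ => ∏ k ∈ Finset.Icc 1 n, (l1 / r k) ^ 2))
    (w : ℤ → ℝ)
    (hw1 : ∀ n : ℤ, 0 ≤ n → w n = t (n.toNat + 1))
    (hw2 : ∀ n : ℤ, n < 0 → w n = r (-n).toNat)
    (W : lp (fun _ : ℤ => ℂ) 2 →L[ℂ] lp (fun _ : ℤ => ℂ) 2)
    (hW : ∀ n : ℤ, W (lp.single 2 n (1 : ℂ)) = (w n : ℂ) • lp.single 2 (n + 1) (1 : ℂ)) :
    ∀ μ : ℂ, ‖μ‖ = l1 → ∃ x, x ≠ 0 ∧ W x = μ • x := by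
  classical
  intro μ hμ
  have hμ0 : μ ≠ 0 := by
    intro h
    rw [h, norm_zero] at hμ
    exact absurd hμ.symm (ne_of_gt hl1)
  have hl1' : l1 ≠ 0 := ne_of_gt hl1
  -- weights are positive
  have hwpos : ∀ n : ℤ, 0 < w n := by
    intro n
    rcases le_or_gt 0 n with h | h
    · rw [hw1 n h]; exact htpos _ (by omega)
    · rw [hw2 n h]
      have h1 : 1 ≤ (-n).toNat := by omega
      exact lt_trans hl1 (hrgt _ h1)
  -- the candidate eigenvector as a function
  set f : ℤ → ℂ := fun n =>
    if h : 0 ≤ n then (∏ k ∈ Finset.range n.toNat, (w (k : ℤ) : ℂ)) / μ ^ n.toNat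
    else μ ^ (-n).toNat / ∏ k ∈ Finset.range (-n).toNat, (w (-(k + 1 : ℕ)) : ℂ) with hf
  have hf0 : f 0 = 1 := by simp [hf]
  -- norms
  have hnorm_pos : ∀ m : ℕ, ‖f (m : ℤ)‖ = ∏ k ∈ Finset.Icc 1 m, (t k / l1) := by
    intro m
    have h0 : (0 : ℤ) ≤ (m : ℤ) := Int.ofNat_nonneg m
    rw [hf]
    simp only [dif_pos h0, Int.toNat_natCast]
    rw [norm_div, norm_prod, norm_pow, hμ]
    have hterm : ∀ k ∈ Finset.range m, ‖((w (k : ℤ) : ℝ) : ℂ)‖ = t (k + 1) := by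
      intro k _
      rw [Complex.norm_real, Real.norm_eq_abs, hw1 (k : ℤ) (Int.ofNat_nonneg k),
        Int.toNat_natCast, abs_of_pos (htpos _ (by omega))]
    rw [Finset.prod_congr rfl hterm, prod_Icc_one_eq_range]
    rw [Finset.prod_div_distrib, Finset.prod_const, Finset.card_range]
  have hnorm_neg : ∀ m : ℕ, 1 ≤ m → ‖f (-(m : ℤ))‖ = ∏ k ∈ Finset.Icc 1 m, (l1 / r k) := by
    intro m hm
    have h0 : ¬ (0 : ℤ) ≤ -(m : ℤ) := by omega
    rw [hf]
    simp only [dif_neg h0, neg_neg, Int.toNat_natCast]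
    rw [norm_div, norm_prod, norm_pow, hμ]
    have hterm : ∀ k ∈ Finset.range m, ‖((w (-(k + 1 : ℕ)) : ℝ) : ℂ)‖ = r (k + 1) := by
      intro k _
      have hneg : (-(k + 1 : ℕ) : ℤ) < 0 := by omega
      have htn : ((-(-(k + 1 : ℕ) : ℤ)).toNat) = k + 1 := by omega
      rw [Complex.norm_real, Real.norm_eq_abs, hw2 _ hneg, htn,
        abs_of_pos (lt_trans hl1 (hrgt _ (by omega)))]
    rw [Finset.prod_congr rfl hterm, prod_Icc_one_eq_range]
    rw [Finset.prod_div_distrib, Finset.prod_const, Finset.card_range]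
  -- membership in ℓ²
  haveI : Fact ((1 : ENNReal) ≤ 2) := ⟨by norm_num⟩
  have hmem : Memℓp f 2 := by
    apply memℓp_gen
    have h2 : ((2 : ENNReal)).toReal = 2 := by norm_num
    rw [h2]
    have key : Summable (fun n : ℤ => ‖f n‖ ^ (2 : ℕ)) := by
      apply Summable.of_nat_of_neg
      · apply htsum.congr
        intro m
        rw [hnorm_pos m, ← Finset.prod_pow]
      · apply hrsum.congr
        intro m
        rcases Nat.eq_zero_or_pos m with hm | hm
        · subst hm; simp [hf0]
        · rw [hnorm_neg m hm, ← Finset.prod_pow]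
    apply key.congr
    intro n
    rw [← Real.rpow_natCast]
    norm_num
  set x : lp (fun _ : ℤ => ℂ) 2 := ⟨f, hmem⟩ with hx
  have hxcoe : ∀ n : ℤ, (x : ∀ _ : ℤ, ℂ) n = f n := fun n => rfl
  refine ⟨x, ?_, ?_⟩
  · intro h
    have : f 0 = 0 := by
      have := congrFun (congrArg (fun v : lp (fun _ : ℤ => ℂ) 2 => (v : ∀ _ : ℤ, ℂ)) h) 0
      simpa [hxcoe] using this
    rw [hf0] at this
    exact one_ne_zero this
  · -- the recurrence
    have hrec : ∀ n : ℤ, (w n : ℂ) * f n = μ * f (n + 1) := by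
      intro n
      have hwn : (w n : ℂ) ≠ 0 := by
        exact_mod_cast ne_of_gt (hwpos n)
      rcases le_or_gt 0 n with h | h
      · have h1 : (0 : ℤ) ≤ n + 1 := by omega
        rw [hf]
        simp only [dif_pos h, dif_pos h1]
        have htn : (n + 1).toNat = n.toNat + 1 := by omega
        rw [htn, Finset.prod_range_succ, pow_succ]
        have hcast : ((n.toNat : ℤ)) = n := Int.toNat_of_nonneg h
        rw [hcast]
        field_simp
      · -- n < 0
        rcases eq_or_lt_of_le (by omega : n + 1 ≤ 0) with h1 | h1
        · -- n = -1
          have hn : n = -1 := by omega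
          subst hn
          rw [hf]
          norm_num
          field_simp
        · -- n + 1 < 0
          have h0 : ¬ (0 : ℤ) ≤ n := by omega
          have h0' : ¬ (0 : ℤ) ≤ n + 1 := by omega
          rw [hf]
          simp only [dif_neg h0, dif_neg h0']
          set m : ℕ := (-(n + 1)).toNat with hm
          have hmn : (-n).toNat = m + 1 := by omega
          rw [hmn, Finset.prod_range_succ, pow_succ]
          have hcast : (-(m + 1 : ℕ) : ℤ) = n := by omega
          rw [hcast]
          have hprodne : (∏ k ∈ Finset.range m, (w (-(k + 1 : ℕ)) : ℂ)) ≠ 0 := by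
            apply Finset.prod_ne_zero_iff.mpr
            intro k _
            exact_mod_cast ne_of_gt (hwpos _)
          rw [mul_div_assoc', mul_div_assoc',
            div_eq_div_iff (mul_ne_zero hprodne hwn) hprodne]
          ring
    -- HasSum machinery
    have hsum : HasSum (fun n : ℤ => lp.single (E := fun _ : ℤ => ℂ) 2 n (f n)) x :=
      lp.hasSum_single (by norm_num) x
    have hWsum : HasSum (fun n : ℤ => W (lp.single (E := fun _ : ℤ => ℂ) 2 n (f n))) (W x) := hsum.mapL W
    have hterm : ∀ n : ℤ, W (lp.single (E := fun _ : ℤ => ℂ) 2 n (f n)) =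
        μ • (lp.single (E := fun _ : ℤ => ℂ) 2 (n + 1) (f (n + 1)) : lp (fun _ : ℤ => ℂ) 2) := by
      intro n
      have e1 : lp.single (E := fun _ : ℤ => ℂ) 2 n (f n) = f n • lp.single (E := fun _ : ℤ => ℂ) 2 n (1 : ℂ) := by
        simpa using lp.single_smul (E := fun _ : ℤ => ℂ) 2 n (f n) (1 : ℂ)
      have e2 : lp.single (E := fun _ : ℤ => ℂ) 2 (n + 1) (f (n + 1)) = f (n + 1) • lp.single (E := fun _ : ℤ => ℂ) 2 (n + 1) (1 : ℂ) := by
        simpa using lp.single_smul (E := fun _ : ℤ => ℂ) 2 (n + 1) (f (n + 1)) (1 : ℂ)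
      rw [e1, e2, map_smul, hW n, smul_smul, smul_smul, mul_comm (f n), hrec n]
    rw [funext hterm] at hWsum
    have hsum' : HasSum (fun n : ℤ => lp.single (E := fun _ : ℤ => ℂ) 2 (n + 1) (f (n + 1))) x := by
      have := (Equiv.addRight (1 : ℤ)).hasSum_iff.mpr hsum
      exact this
    have hsum'' : HasSum
        (fun n : ℤ => μ • (lp.single (E := fun _ : ℤ => ℂ) 2 (n + 1) (f (n + 1)) : lp (fun _ : ℤ => ℂ) 2))
        (μ • x) :=
      hsum'.const_smul μ
    exact hWsum.unique hsum''
end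

section
/- Let (α_n)_{n≥1} and (β_n)_{n≥1} be sequences of positive reals with α_n strictly increasing converging to λ₂ and β_n strictly decreasing converging to λ₁, where 0 < λ₁ < λ₂. Let (A_n)_{n∈ℤ} be a sequence of invertible positive operators on Hilbert spaces H_n with spectra σ(A_n) ⊆ [β_{n+1}, β_n] for n ≥ 1 and σ(A_{-n}) ⊆ [α_n, α_{n+1}] for n ≥ 1 (and A₀, A_{−1} bounded invertible with spectrum in [λ₁, λ₂]). Then for every λ ∈ ℂ with λ₁ < |λ| < λ₂, the two-sided sequence defined by y_n = λ^{-n} A_{n-1}A_{n-2}⋯A_0 x for n ≥ 1 and y_n = λ^{-n} A_n^{-1}⋯A_{-1}^{-1} x for n ≤ −1 (y₀ = x, x a unit vector of H₀) satisfies Σ_{n∈ℤ} ‖y_n‖² < ∞. -/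
open Filter

lemma stmt17_op_bounds {H : Type*} [NormedAddCommGroup H] [InnerProductSpace ℂ H]
    [CompleteSpace H] (A : H →L[ℂ] H) (hA : IsSelfAdjoint A) {a b : ℝ}
    (ha : 0 ≤ a) (hb : 0 ≤ b)
    (hspec : spectrum ℂ A ⊆ Complex.ofReal '' Set.Icc a b) (z : H) :
    ‖A z‖ ≤ b * ‖z‖ ∧ a * ‖z‖ ≤ ‖A z‖ := by
  constructor
  · have hnorm : ‖A‖ ≤ b := by
      rw [← hA.toReal_spectralRadius_complex_eq_norm]
      have h1 : spectralRadius ℂ A ≤ ENNReal.ofReal b := by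
        rw [spectralRadius]
        refine iSup₂_le fun k hk => ?_
        obtain ⟨t, ht, rfl⟩ := hspec hk
        rw [← ENNReal.ofReal_coe_nnreal]
        apply ENNReal.ofReal_le_ofReal
        have : ‖(t : ℂ)‖ = |t| := by simp
        rw [coe_nnnorm, this, abs_of_nonneg (le_trans ha ht.1)]
        exact ht.2
      calc (spectralRadius ℂ A).toReal ≤ (ENNReal.ofReal b).toReal :=
            ENNReal.toReal_mono ENNReal.ofReal_ne_top h1
        _ = b := ENNReal.toReal_ofReal hb
    calc ‖A z‖ ≤ ‖A‖ * ‖z‖ := A.le_opNorm z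
      _ ≤ b * ‖z‖ := by gcongr
  · have hsa1 : IsSelfAdjoint ((a : ℂ) • (1 : H →L[ℂ] H)) := by
      rw [IsSelfAdjoint, star_smul, star_one, Complex.star_def, Complex.conj_ofReal]
    have hA' : IsSelfAdjoint (A - (a : ℂ) • 1) := hA.sub hsa1
    have hpos : 0 ≤ A - (a : ℂ) • 1 := by
      rw [StarOrderedRing.nonneg_iff_spectrum_nonneg (R := ℝ) _ hA']
      intro t ht
      have htc : (algebraMap ℝ ℂ t) ∈ spectrum ℂ (A - (a : ℂ) • 1) :=
        spectrum.algebraMap_mem ℂ ht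
      have halg : (a : ℂ) • (1 : H →L[ℂ] H) = algebraMap ℂ (H →L[ℂ] H) (a : ℂ) :=
        (Algebra.algebraMap_eq_smul_one _).symm
      rw [halg, ← spectrum.sub_singleton_eq] at htc
      obtain ⟨u, hu, v, hv, huv⟩ := htc
      obtain ⟨s, hs, rfl⟩ := hspec hu
      rw [Set.mem_singleton_iff] at hv
      subst hv
      have : algebraMap ℝ ℂ t = ((s - a : ℝ) : ℂ) := by
        rw [← huv]; push_cast; ring
      have ht' : t = s - a := by
        rw [show algebraMap ℝ ℂ t = (t : ℂ) from rfl] at this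
        exact_mod_cast this
      rw [ht']
      linarith [hs.1]
    have hP : (A - (a : ℂ) • 1).IsPositive :=
      (ContinuousLinearMap.nonneg_iff_isPositive _).mp hpos
    have h2 := hP.inner_nonneg_left z

    have h3 : a * ‖z‖ ^ 2 ≤ RCLike.re (inner (𝕜 := ℂ) (A z) z) := by
      rw [ContinuousLinearMap.sub_apply, inner_sub_left] at h2
      simp only [ContinuousLinearMap.smul_apply, ContinuousLinearMap.one_apply,
        inner_smul_left, Complex.star_def, Complex.conj_ofReal] at h2
      replace h2 : 0 ≤ RCLike.re (inner (𝕜 := ℂ) (A z) z - (a : ℂ) * inner (𝕜 := ℂ) z z) :=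
        (RCLike.nonneg_iff.mp h2).1
      rw [map_sub] at h2
      have : RCLike.re ((a : ℂ) * inner (𝕜 := ℂ) z z) = a * ‖z‖ ^ 2 := by
        rw [inner_self_eq_norm_sq_to_K]
        push_cast
        simp [← Complex.ofReal_pow]
      linarith [h2, this.symm.le]
    have h4 : RCLike.re (inner (𝕜 := ℂ) (A z) z) ≤ ‖A z‖ * ‖z‖ := by
      calc RCLike.re (inner (𝕜 := ℂ) (A z) z) ≤ ‖inner (𝕜 := ℂ) (A z) z‖ :=
            RCLike.re_le_norm _
        _ ≤ ‖A z‖ * ‖z‖ := norm_inner_le_norm _ _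
    rcases eq_or_lt_of_le (norm_nonneg z) with h0 | h0
    · rw [← h0]; simpa using norm_nonneg (A z)
    · have : a * ‖z‖ * ‖z‖ ≤ ‖A z‖ * ‖z‖ := by nlinarith
      exact le_of_mul_le_mul_right this h0

/-- Key summability estimate of Theorem 5.1: with `α_n ↑ λ₂`, `β_n ↓ λ₁`, invertible
self-adjoint operators `A_n` with `σ(A_n) ⊆ [β_{n+1}, β_n]` (`n ≥ 1`),
`σ(A_{−n}) ⊆ [α_n, α_{n+1}]` (`n ≥ 1`), `σ(A₀), σ(A_{−1}) ⊆ [λ₁, λ₂]`, and a unit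
vector `x`, the two-sided sequence defined by `y₀ = x` and `λ y_{n+1} = A_n y_n`
satisfies `Σ_{n∈ℤ} ‖y_n‖² < ∞` whenever `λ₁ < |λ| < λ₂`. -/
theorem stmt17 {H : Type*} [NormedAddCommGroup H] [InnerProductSpace ℂ H] [CompleteSpace H]
    (l1 l2 : ℝ) (hl1 : 0 < l1) (hl12 : l1 < l2)
    (α β : ℕ → ℝ) (hαmono : StrictMono α) (hαlim : Tendsto α atTop (nhds l2))
    (hβmono : StrictAnti β) (hβlim : Tendsto β atTop (nhds l1))
    (A : ℤ → H →L[ℂ] H) (hsa : ∀ n : ℤ, IsSelfAdjoint (A n))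
    (hinv : ∀ n : ℤ, IsUnit (A n))
    (hspecP : ∀ n : ℕ, 1 ≤ n →
      spectrum ℂ (A (n : ℤ)) ⊆ Complex.ofReal '' Set.Icc (β (n + 1)) (β n))
    (hspecN : ∀ n : ℕ, 1 ≤ n →
      spectrum ℂ (A (-(n : ℤ))) ⊆ Complex.ofReal '' Set.Icc (α n) (α (n + 1)))
    (hspec0 : spectrum ℂ (A 0) ⊆ Complex.ofReal '' Set.Icc l1 l2)
    (hspecm1 : spectrum ℂ (A (-1)) ⊆ Complex.ofReal '' Set.Icc l1 l2)
    (μ : ℂ) (hμ1 : l1 < ‖μ‖) (hμ2 : ‖μ‖ < l2)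
    (x : H) (hx : ‖x‖ = 1) (y : ℤ → H) (hy0 : y 0 = x)
    (hrec : ∀ n : ℤ, μ • y (n + 1) = A n (y n)) :
    Summable (fun n : ℤ => ‖y n‖ ^ 2) := by
  set m := ‖μ‖ with hm
  have hm0 : 0 < m := lt_trans hl1 hμ1
  have hβge : ∀ n, l1 ≤ β n := fun n =>
    le_of_tendsto hβlim (eventually_atTop.2 ⟨n, fun k hk => hβmono.antitone hk⟩)
  have hαle : ∀ n, α n ≤ l2 := fun n =>
    ge_of_tendsto hαlim (eventually_atTop.2 ⟨n, fun k hk => hαmono.monotone hk⟩)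
  -- positive side
  obtain ⟨N0, hN0⟩ := eventually_atTop.1 (hβlim.eventually_lt_const hμ1)
  set N := max N0 1 with hN
  have hβN : β N < m := hN0 N (le_max_left _ _)
  set r := β N / m with hr
  have hr0 : 0 ≤ r := div_nonneg (le_trans hl1.le (hβge N)) hm0.le
  have hr1 : r < 1 := (div_lt_one hm0).2 hβN
  have hstep : ∀ n : ℕ, N ≤ n → ‖y ((n : ℤ) + 1)‖ ≤ r * ‖y (n : ℤ)‖ := by
    intro n hn
    have hn1 : 1 ≤ n := le_trans (le_max_right _ _) hn
    have hsub : spectrum ℂ (A (n : ℤ)) ⊆ Complex.ofReal '' Set.Icc l1 (β N) :=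
      (hspecP n hn1).trans (Set.image_mono
        (Set.Icc_subset_Icc (hβge _) (hβmono.antitone hn)))
    have hub := (stmt17_op_bounds (A (n : ℤ)) (hsa _) hl1.le
      (le_trans hl1.le (hβge N)) hsub (y (n : ℤ))).1
    have hkey : m * ‖y ((n : ℤ) + 1)‖ ≤ β N * ‖y (n : ℤ)‖ := by
      have := hrec (n : ℤ)
      calc m * ‖y ((n : ℤ) + 1)‖ = ‖μ • y ((n : ℤ) + 1)‖ := by
            rw [norm_smul, hm]
        _ = ‖A (n : ℤ) (y (n : ℤ))‖ := by rw [this]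
        _ ≤ β N * ‖y (n : ℤ)‖ := hub
    calc ‖y ((n : ℤ) + 1)‖ = m * ‖y ((n : ℤ) + 1)‖ / m := by field_simp
      _ ≤ β N * ‖y (n : ℤ)‖ / m := by gcongr
      _ = r * ‖y (n : ℤ)‖ := by rw [hr]; ring
  have hgeo : ∀ k : ℕ, ‖y ((N : ℤ) + k)‖ ≤ ‖y (N : ℤ)‖ * r ^ k := by
    intro k
    induction k with
    | zero => simp
    | succ k ih =>
      have h1 : ((N : ℤ) + (k + 1 : ℕ)) = ((N + k : ℕ) : ℤ) + 1 := by push_cast; ring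
      have h2 : ((N + k : ℕ) : ℤ) = (N : ℤ) + k := by push_cast; ring
      rw [h1]
      calc ‖y (((N + k : ℕ) : ℤ) + 1)‖ ≤ r * ‖y ((N + k : ℕ) : ℤ)‖ :=
            hstep (N + k) (Nat.le_add_right _ _)
        _ ≤ r * (‖y (N : ℤ)‖ * r ^ k) := by rw [h2]; gcongr
        _ = ‖y (N : ℤ)‖ * r ^ (k + 1) := by ring
  have hsumpos : Summable (fun n : ℕ => ‖y (n : ℤ)‖ ^ 2) := by
    rw [← summable_nat_add_iff N]
    have hgsum : Summable (fun k : ℕ => ‖y (N : ℤ)‖ ^ 2 * (r ^ 2) ^ k) :=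
      (summable_geometric_of_lt_one (by positivity) (by nlinarith)).mul_left _
    refine Summable.of_nonneg_of_le (fun k => by positivity) (fun k => ?_) hgsum
    have h2 : ((k + N : ℕ) : ℤ) = (N : ℤ) + k := by push_cast; ring
    rw [h2]
    calc ‖y ((N : ℤ) + k)‖ ^ 2 ≤ (‖y (N : ℤ)‖ * r ^ k) ^ 2 := by
          have := hgeo k
          nlinarith [norm_nonneg (y ((N : ℤ) + k))]
      _ = ‖y (N : ℤ)‖ ^ 2 * (r ^ 2) ^ k := by ring
  -- negative side
  obtain ⟨M0, hM0⟩ := eventually_atTop.1 (hαlim.eventually_const_lt hμ2)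
  set M := max M0 1 with hM
  have hαM : m < α M := hM0 M (le_max_left _ _)
  have hα0 : 0 < α M := lt_trans hm0 hαM
  set s := m / α M with hs
  have hs0 : 0 ≤ s := div_nonneg hm0.le hα0.le
  have hs1 : s < 1 := (div_lt_one hα0).2 hαM
  have hstepN : ∀ n : ℕ, M ≤ n → ‖y (-(n : ℤ) - 1)‖ ≤ s * ‖y (-(n : ℤ))‖ := by
    intro n hn
    have hidx : (-(n : ℤ) - 1) = -((n + 1 : ℕ) : ℤ) := by push_cast; ring
    have hsub : spectrum ℂ (A (-((n + 1 : ℕ) : ℤ))) ⊆ Complex.ofReal '' Set.Icc (α M) l2 :=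
      (hspecN (n + 1) (Nat.le_add_left _ _)).trans (Set.image_mono
        (Set.Icc_subset_Icc (hαmono.monotone (le_trans hn (Nat.le_succ n))) (hαle _)))
    have hlb := (stmt17_op_bounds (A (-((n + 1 : ℕ) : ℤ))) (hsa _) hα0.le
      (le_trans hl1.le hl12.le) hsub (y (-((n + 1 : ℕ) : ℤ)))).2
    have hkey : α M * ‖y (-(n : ℤ) - 1)‖ ≤ m * ‖y (-(n : ℤ))‖ := by
      have hr2 := hrec (-(n : ℤ) - 1)
      have h3 : (-(n : ℤ) - 1) + 1 = -(n : ℤ) := by ring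
      rw [h3] at hr2
      calc α M * ‖y (-(n : ℤ) - 1)‖
          ≤ ‖A (-((n + 1 : ℕ) : ℤ)) (y (-((n + 1 : ℕ) : ℤ)))‖ := by rw [← hidx] at hlb ⊢; exact hlb
        _ = ‖μ • y (-(n : ℤ))‖ := by rw [← hidx, ← hr2]
        _ = m * ‖y (-(n : ℤ))‖ := by rw [norm_smul, hm]
    calc ‖y (-(n : ℤ) - 1)‖ = α M * ‖y (-(n : ℤ) - 1)‖ / α M := by field_simp
      _ ≤ m * ‖y (-(n : ℤ))‖ / α M := by gcongr
      _ = s * ‖y (-(n : ℤ))‖ := by rw [hs]; ring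
  have hgeoN : ∀ k : ℕ, ‖y (-(M : ℤ) - k)‖ ≤ ‖y (-(M : ℤ))‖ * s ^ k := by
    intro k
    induction k with
    | zero => simp
    | succ k ih =>
      have h1 : (-(M : ℤ) - (k + 1 : ℕ)) = -((M + k : ℕ) : ℤ) - 1 := by push_cast; ring
      have h2 : -((M + k : ℕ) : ℤ) = -(M : ℤ) - k := by push_cast; ring
      rw [h1]
      calc ‖y (-((M + k : ℕ) : ℤ) - 1)‖ ≤ s * ‖y (-((M + k : ℕ) : ℤ))‖ :=
            hstepN (M + k) (Nat.le_add_right _ _)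
        _ ≤ s * (‖y (-(M : ℤ))‖ * s ^ k) := by rw [h2]; gcongr
        _ = ‖y (-(M : ℤ))‖ * s ^ (k + 1) := by ring
  have hsumneg : Summable (fun n : ℕ => ‖y (-(n : ℤ))‖ ^ 2) := by
    rw [← summable_nat_add_iff M]
    have hgsum : Summable (fun k : ℕ => ‖y (-(M : ℤ))‖ ^ 2 * (s ^ 2) ^ k) :=
      (summable_geometric_of_lt_one (by positivity) (by nlinarith)).mul_left _
    refine Summable.of_nonneg_of_le (fun k => by positivity) (fun k => ?_) hgsum
    have h2 : -((k + M : ℕ) : ℤ) = -(M : ℤ) - k := by push_cast; ring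
    rw [h2]
    calc ‖y (-(M : ℤ) - k)‖ ^ 2 ≤ (‖y (-(M : ℤ))‖ * s ^ k) ^ 2 := by
          have := hgeoN k
          nlinarith [norm_nonneg (y (-(M : ℤ) - k))]
      _ = ‖y (-(M : ℤ))‖ ^ 2 * (s ^ 2) ^ k := by ring
  exact Summable.of_nat_of_neg hsumpos hsumneg
end
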